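/- arXiv:2408.06978 — 2 statements merged into one kernel-verified Lean document; each statement's English description precedes it below -/
import Mathlib

section
/- Let p, q ∈ [1,∞), r ∈ [1,∞], and let Y be a stochastic process with ‖Y‖_{p,q,r,[0,T]} < ∞. Then Y is L^{q,r}_•-regulated: for every s ∈ [0,T), the map [s,T] ∋ t ↦ δY_{s,t} admits left and right limits in L^{q,r}_s; that is, for every t ∈ [s,T) there exists L⁺ ∈ L^{q,r}_s with ‖δY_{s,u} − L⁺‖_{q,r,s} → 0 as u ↘ t, and for every t ∈ (s,T] there exists L⁻ ∈ L^{q,r}_s with ‖δY_{s,u} − L⁻‖_{q,r,s} → 0 as u ↗ t. -/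
open MeasureTheory Filter Set ENNReal

noncomputable section

/-- The conditional `L^{q,r}_s`-type norm `‖Y‖_{q,r,s} = ‖E_s[|Y|^q]‖_{L^r}^{1/q}`. -/
def condLqrs {Ω : Type*} {m0 : MeasurableSpace Ω} (μ : Measure Ω)
    (ℱ : MeasureTheory.Filtration ℝ m0) {E : Type*} [NormedAddCommGroup E]
    (q : ℝ) (r : ℝ≥0∞) (s : ℝ) (Y : Ω → E) : ℝ≥0∞ :=
  (eLpNorm (μ[(fun ω => ‖Y ω‖ ^ q) | ℱ s]) r μ) ^ (1 / q)

/-- Membership in the space `L^{q,r}_s` (with the measurability and integrability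
needed for the conditional expectation to be meaningful). -/
def MemLqrs {Ω : Type*} {m0 : MeasurableSpace Ω} (μ : Measure Ω)
    (ℱ : MeasureTheory.Filtration ℝ m0) {E : Type*} [NormedAddCommGroup E]
    (q : ℝ) (r : ℝ≥0∞) (s : ℝ) (Y : Ω → E) : Prop :=
  AEStronglyMeasurable Y μ ∧ Integrable (fun ω => ‖Y ω‖ ^ q) μ ∧
    condLqrs μ ℱ q r s Y < ⊤

/-- A partition `s = t_0 < t_1 < ⋯ < t_n = t` of the interval `[s,t]`. -/
structure IntervalPartition (s t : ℝ) where
  n : ℕ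
  pt : ℕ → ℝ
  h0 : pt 0 = s
  hn : pt n = t
  mono : ∀ i < n, pt i < pt (i + 1)

/-- The mesh size of a partition. -/
def IntervalPartition.mesh {s t : ℝ} (P : IntervalPartition s t) : ℝ :=
  ⨆ i : Fin P.n, (P.pt (i + 1) - P.pt i)

/-- The set of points of a partition. -/
def IntervalPartition.points {s t : ℝ} (P : IntervalPartition s t) : Set ℝ :=
  P.pt '' {i | i ≤ P.n}

/-- `p`-variation of a two-parameter (deterministic) function over `[s,t]`. -/
def pVar {E : Type*} [NormedAddCommGroup E] (p : ℝ) (F : ℝ → ℝ → E) (s t : ℝ) : ℝ≥0∞ :=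
  ⨆ P : IntervalPartition s t,
    (∑ i ∈ Finset.range P.n, (‖F (P.pt i) (P.pt (i + 1))‖₊ : ℝ≥0∞) ^ p) ^ (1 / p)

/-- `p`-variation of a path: `‖X‖_{p,[s,t]}`. -/
def pVarPath {E : Type*} [NormedAddCommGroup E] (p : ℝ) (X : ℝ → E) (s t : ℝ) : ℝ≥0∞ :=
  pVar p (fun u v => X v - X u) s t

/-- `‖F‖_{p,[s,t)}`, the `p`-variation over the half-open interval. -/
def pVarOpen {E : Type*} [NormedAddCommGroup E] (p : ℝ) (F : ℝ → ℝ → E) (s t : ℝ) : ℝ≥0∞ :=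
  ⨆ u ∈ Set.Ico s t, pVar p F s u

/-- `‖X‖_{p,[s,t)}` for a path. -/
def pVarPathOpen {E : Type*} [NormedAddCommGroup E] (p : ℝ) (X : ℝ → E) (s t : ℝ) : ℝ≥0∞ :=
  ⨆ u ∈ Set.Ico s t, pVarPath p X s u

/-- The mixed variation norm `‖Y‖_{p,q,r,[s,t]}` of a stochastic process. -/
def pqrVar {Ω : Type*} {m0 : MeasurableSpace Ω} (μ : Measure Ω)
    (ℱ : MeasureTheory.Filtration ℝ m0) {E : Type*} [NormedAddCommGroup E]
    (p q : ℝ) (r : ℝ≥0∞) (Y : ℝ → Ω → E) (s t : ℝ) : ℝ≥0∞ :=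
  ⨆ P : IntervalPartition s t,
    (∑ i ∈ Finset.range P.n,
      (condLqrs μ ℱ q r (P.pt i) (fun ω => Y (P.pt (i + 1)) ω - Y (P.pt i) ω)) ^ p) ^ (1 / p)

/-- `‖Y‖_{p,q,r,[s,t)}`. -/
def pqrVarOpen {Ω : Type*} {m0 : MeasurableSpace Ω} (μ : Measure Ω)
    (ℱ : MeasureTheory.Filtration ℝ m0) {E : Type*} [NormedAddCommGroup E]
    (p q : ℝ) (r : ℝ≥0∞) (Y : ℝ → Ω → E) (s t : ℝ) : ℝ≥0∞ :=
  ⨆ u ∈ Set.Ico s t, pqrVar μ ℱ p q r Y s u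

/-- The variation norm `(sup_𝒫 Σ_{[u,v]∈𝒫} ‖E_u[R_{u,v}]‖_{L^ρ}^a)^{1/a}` of the
conditional expectations of a two-parameter process `R`; with `a = p/2` and
`ρ = qr` this is `‖E_• R‖_{p/2,qr,[s,t]}`. -/
def pCondVar {Ω : Type*} {m0 : MeasurableSpace Ω} (μ : Measure Ω)
    (ℱ : MeasureTheory.Filtration ℝ m0) {E : Type*} [NormedAddCommGroup E]
    [NormedSpace ℝ E] [CompleteSpace E]
    (a : ℝ) (ρ : ℝ≥0∞) (R : ℝ → ℝ → Ω → E) (s t : ℝ) : ℝ≥0∞ :=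
  ⨆ P : IntervalPartition s t,
    (∑ i ∈ Finset.range P.n,
      (eLpNorm (μ[R (P.pt i) (P.pt (i + 1)) | ℱ (P.pt i)]) ρ μ) ^ a) ^ (1 / a)

/-- `‖E_• R‖_{a,ρ,[s,t)}`. -/
def pCondVarOpen {Ω : Type*} {m0 : MeasurableSpace Ω} (μ : Measure Ω)
    (ℱ : MeasureTheory.Filtration ℝ m0) {E : Type*} [NormedAddCommGroup E]
    [NormedSpace ℝ E] [CompleteSpace E]
    (a : ℝ) (ρ : ℝ≥0∞) (R : ℝ → ℝ → Ω → E) (s t : ℝ) : ℝ≥0∞ :=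
  ⨆ u ∈ Set.Ico s t, pCondVar μ ℱ a ρ R s u

/-- A control function on the simplex `Δ_{[0,T]}`: nonnegative and superadditive. -/
def IsControl (T : ℝ) (w : ℝ → ℝ → ℝ) : Prop :=
  (∀ ⦃s t : ℝ⦄, 0 ≤ s → s ≤ t → t ≤ T → 0 ≤ w s t) ∧
  (∀ ⦃s u t : ℝ⦄, 0 ≤ s → s ≤ u → u ≤ t → t ≤ T → w s u + w u t ≤ w s t)

/-- Right-continuity of a control in its first argument: `w(s+,t) = w(s,t)`. -/
def RCFirst (T : ℝ) (w : ℝ → ℝ → ℝ) : Prop :=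
  ∀ ⦃s t : ℝ⦄, 0 ≤ s → s < t → t ≤ T →
    Filter.Tendsto (fun u => w u t) (nhdsWithin s (Set.Ioo s t)) (nhds (w s t))

/-- Right-continuity of a control in its second argument: `w(s,t+) = w(s,t)`. -/
def RCSecond (T : ℝ) (w : ℝ → ℝ → ℝ) : Prop :=
  ∀ ⦃s t : ℝ⦄, 0 ≤ s → s ≤ t → t < T →
    Filter.Tendsto (fun u => w s u) (nhdsWithin t (Set.Ioc t T)) (nhds (w s t))

/-- The left limit `w(s,t-)` of a control in its second argument (expressed as a
supremum, which agrees with the limit by monotonicity; it equals `0` when `s = t`). -/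
def ctrlLeft (w : ℝ → ℝ → ℝ) (s t : ℝ) : ℝ :=
  sSup (w s '' Set.Ico s t)

/-- Right-continuity in probability of a stochastic process on `[0,T]`. -/
def RCinProb {Ω : Type*} {m0 : MeasurableSpace Ω} (μ : Measure Ω) (T : ℝ)
    {E : Type*} [NormedAddCommGroup E] (Y : ℝ → Ω → E) : Prop :=
  ∀ s ∈ Set.Ico (0 : ℝ) T, ∀ ε : ℝ, 0 < ε →
    Filter.Tendsto (fun t => μ {ω | ε ≤ ‖Y t ω - Y s ω‖})
      (nhdsWithin s (Set.Ioc s T)) (nhds 0)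

/-- Membership in the space `V^p L^{q,r}`. -/
def MemVpLqr {Ω : Type*} {m0 : MeasurableSpace Ω} (μ : Measure Ω)
    (ℱ : MeasureTheory.Filtration ℝ m0) {E : Type*} [NormedAddCommGroup E]
    (T p q : ℝ) (r : ℝ≥0∞) (Y : ℝ → Ω → E) : Prop :=
  (∀ t ∈ Set.Icc (0 : ℝ) T, AEStronglyMeasurable (Y t) μ) ∧
  (∀ ⦃u v : ℝ⦄, 0 ≤ u → u ≤ v → v ≤ T →
    Integrable (fun ω => ‖Y v ω - Y u ω‖ ^ q) μ) ∧
  RCinProb μ T Y ∧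
  MemLp (Y 0) (ENNReal.ofReal q) μ ∧
  pqrVar μ ℱ p q r Y 0 T < ⊤

/-- A function `g` is càdlàg on the interval `[a,b]`. -/
def CadlagOn {E : Type*} [TopologicalSpace E] (g : ℝ → E) (a b : ℝ) : Prop :=
  (∀ t ∈ Set.Ico a b, Filter.Tendsto g (nhdsWithin t (Set.Ioc t b)) (nhds (g t))) ∧
  (∀ t ∈ Set.Ioc a b, ∃ L : E, Filter.Tendsto g (nhdsWithin t (Set.Ico a t)) (nhds L))

/-- Chen's relation for a rough-path pair `(X, 𝕏)`. -/
def ChenRelation (T : ℝ) {d : ℕ} (X : ℝ → Fin d → ℝ)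
    (XX : ℝ → ℝ → Fin d → Fin d → ℝ) : Prop :=
  ∀ ⦃s u t : ℝ⦄, 0 ≤ s → s ≤ u → u ≤ t → t ≤ T →
    XX s t = XX s u + XX u t + fun i j => (X u i - X s i) * (X t j - X u j)

/-- A càdlàg `p`-rough path over `[0,T]` with values in `ℝ^d`. -/
def IsCadlagRoughPath (T p : ℝ) {d : ℕ} (X : ℝ → Fin d → ℝ)
    (XX : ℝ → ℝ → Fin d → Fin d → ℝ) : Prop :=
  CadlagOn X 0 T ∧
  (∀ s ∈ Set.Ico (0 : ℝ) T, CadlagOn (XX s) s T) ∧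
  pVarPath p X 0 T < ⊤ ∧
  pVar (p / 2) XX 0 T < ⊤ ∧
  ChenRelation T X XX

/-- The remainder `R^Y_{u,v} = δY_{u,v} - Y'_u δX_{u,v}` of a controlled path. -/
def scpRemainder {Ω : Type*} {d : ℕ} {W : Type*} [NormedAddCommGroup W] [NormedSpace ℝ W]
    (X : ℝ → Fin d → ℝ) (Y : ℝ → Ω → W)
    (Y' : ℝ → Ω → ((Fin d → ℝ) →L[ℝ] W)) (u v : ℝ) (ω : Ω) : W :=
  (Y v ω - Y u ω) - (Y' u ω) (fun i => X v i - X u i)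

/-- A stochastic controlled path `(Y,Y') ∈ 𝒱^{p,q,r}_X`. -/
def IsSCP {Ω : Type*} {m0 : MeasurableSpace Ω} (μ : Measure Ω)
    (ℱ : MeasureTheory.Filtration ℝ m0) (T p q : ℝ) (r : ℝ≥0∞)
    {d : ℕ} {W : Type*} [NormedAddCommGroup W] [NormedSpace ℝ W] [CompleteSpace W]
    (X : ℝ → Fin d → ℝ) (Y : ℝ → Ω → W)
    (Y' : ℝ → Ω → ((Fin d → ℝ) →L[ℝ] W)) : Prop :=
  (∀ t ∈ Set.Icc (0 : ℝ) T,
    StronglyMeasurable[ℱ t] (Y t) ∧ StronglyMeasurable[ℱ t] (Y' t)) ∧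
  MemVpLqr μ ℱ T p q r Y ∧
  MemVpLqr μ ℱ T p q r Y' ∧
  (∃ K : ℝ, ∀ s ∈ Set.Icc (0 : ℝ) T,
    eLpNorm (Y' s) (ENNReal.ofReal q * r) μ ≤ ENNReal.ofReal K) ∧
  (∀ ⦃u v : ℝ⦄, 0 ≤ u → u ≤ v → v ≤ T →
    Integrable (scpRemainder X Y Y' u v) μ) ∧
  pCondVar μ ℱ (p / 2) (ENNReal.ofReal q * r) (scpRemainder X Y Y') 0 T < ⊤

/-- Contraction `A(𝔾)` of a second-order Gubinelli derivative with a `d×d` array. -/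
def contract2 {d : ℕ} {W : Type*} [NormedAddCommGroup W] [NormedSpace ℝ W]
    (A : (Fin d → ℝ) →L[ℝ] ((Fin d → ℝ) →L[ℝ] W)) (G : Fin d → Fin d → ℝ) : W :=
  ∑ i, ∑ j, G i j • (A (Pi.single i 1)) (Pi.single j 1)

/-- Outer (tensor) product of two vectors. -/
def outer {e e' : ℕ} (x : Fin e → ℝ) (y : Fin e' → ℝ) : Fin e → Fin e' → ℝ :=
  fun a b => x a * y b

/-- `(A ⊗ B)(G)` for Gubinelli derivatives `A, B` and a `d×d` array `G`. -/
def tensorApply {d e e' : ℕ} (A : (Fin d → ℝ) →L[ℝ] (Fin e → ℝ))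
    (B : (Fin d → ℝ) →L[ℝ] (Fin e' → ℝ)) (G : Fin d → Fin d → ℝ) :
    Fin e → Fin e' → ℝ :=
  fun a b => ∑ i, ∑ j, G i j * (A (Pi.single i 1) a) * (B (Pi.single j 1) b)

/-- Symmetrization of a `d×d` array. -/
def symPart {d : ℕ} (G : Fin d → Fin d → ℝ) : Fin d → Fin d → ℝ :=
  fun i j => (G i j + G j i) / 2

/-- Membership in `C^n_b`. -/
def MemCnb {E F : Type*} [NormedAddCommGroup E] [NormedSpace ℝ E]
    [NormedAddCommGroup F] [NormedSpace ℝ F] (n : ℕ) (f : E → F) : Prop :=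
  ContDiff ℝ (n - 1 : ℕ) f ∧
  (∀ k ∈ Finset.range n, ∃ K : ℝ, ∀ x, ‖iteratedFDeriv ℝ k f x‖ ≤ K) ∧
  ∃ K : ℝ, ∀ x y,
    ‖iteratedFDeriv ℝ (n - 1) f x - iteratedFDeriv ℝ (n - 1) f y‖ ≤ K * ‖x - y‖

/-- The `C^n_b` norm. -/
def CnbNorm {E F : Type*} [NormedAddCommGroup E] [NormedSpace ℝ E]
    [NormedAddCommGroup F] [NormedSpace ℝ F] (n : ℕ) (f : E → F) : ℝ :=
  (∑ k ∈ Finset.range n, ⨆ x : E, ‖iteratedFDeriv ℝ k f x‖) +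
    ⨆ x : E, ⨆ y : E,
      ‖iteratedFDeriv ℝ (n - 1) f x - iteratedFDeriv ℝ (n - 1) f y‖ / ‖x - y‖


section Stmt5AuxSection
open Topology
namespace Stmt5Aux



/-- Tangent line inequality for `rpow`. -/
lemma tangent_rpow {ρ : ℝ} (hρ : 1 ≤ ρ) {x y : ℝ} (hx : 0 ≤ x) (hy : 0 < y) :
    (1 - ρ) * y ^ ρ + ρ * y ^ (ρ - 1) * x ≤ x ^ ρ := by
  have hs : -1 ≤ x / y - 1 := by
    have : 0 ≤ x / y := div_nonneg hx hy.le
    linarith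
  have hb := one_add_mul_self_le_rpow_one_add hs hρ
  have h1 : 1 + (x / y - 1) = x / y := by ring
  rw [h1] at hb
  have hdiv : (x / y) ^ ρ = x ^ ρ / y ^ ρ := Real.div_rpow hx hy.le ρ
  have hyρ : (0:ℝ) < y ^ ρ := Real.rpow_pos_of_pos hy _
  have hy1 : y ^ (ρ - 1) = y ^ ρ / y := by
    rw [Real.rpow_sub hy, Real.rpow_one]
  have h2 : (1 + ρ * (x / y - 1)) * y ^ ρ ≤ x ^ ρ := by
    rw [hdiv] at hb
    calc (1 + ρ * (x / y - 1)) * y ^ ρ ≤ x ^ ρ / y ^ ρ * y ^ ρ :=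
          mul_le_mul_of_nonneg_right hb hyρ.le
      _ = x ^ ρ := div_mul_cancel₀ _ hyρ.ne'
  refine le_trans (le_of_eq ?_) h2
  rw [hy1]
  field_simp
  ring

/-- One-sided mean value inequality. -/
lemma rpow_sub_rpow_le {q : ℝ} (hq : 1 ≤ q) {x y : ℝ} (hx : 0 ≤ x) (hxy : x ≤ y) :
    y ^ q - x ^ q ≤ q * y ^ (q - 1) * (y - x) := by
  rcases eq_or_lt_of_le (hx.trans hxy) with h0 | h0
  · have hy0 : y = 0 := h0.symm
    have hx0 : x = 0 := le_antisymm (hxy.trans_eq hy0) hx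
    simp [hx0, hy0]
  · have := tangent_rpow hq hx h0
    have hq1 : y ^ (q - 1) * y = y ^ q := by
      rw [Real.rpow_sub h0, Real.rpow_one]
      exact div_mul_cancel₀ _ h0.ne'
    nlinarith [hq1]

/-- Mean value inequality for `rpow`. -/
lemma abs_rpow_sub_rpow_le {q : ℝ} (hq : 1 ≤ q) {a b : ℝ} (ha : 0 ≤ a) (hb : 0 ≤ b) :
    |a ^ q - b ^ q| ≤ q * (a ^ (q - 1) + b ^ (q - 1)) * |a - b| := by
  have hq0 : (0:ℝ) < q := lt_of_lt_of_le zero_lt_one hq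
  rcases le_total a b with h | h
  · have h1 : a ^ q ≤ b ^ q := Real.rpow_le_rpow ha h hq0.le
    have h2 := rpow_sub_rpow_le hq ha h
    have h3 : |a ^ q - b ^ q| = b ^ q - a ^ q := by
      rw [abs_sub_comm, abs_of_nonneg (by linarith)]
    have h4 : |a - b| = b - a := by rw [abs_sub_comm, abs_of_nonneg (by linarith)]
    have h5 : 0 ≤ a ^ (q - 1) := Real.rpow_nonneg ha _
    have h6 : 0 ≤ b ^ (q - 1) := Real.rpow_nonneg hb _
    have h7 : 0 ≤ q * (a ^ (q - 1)) * (b - a) :=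
      mul_nonneg (mul_nonneg hq0.le h5) (by linarith)
    rw [h3, h4]
    nlinarith [h2, h7]
  · have h1 : b ^ q ≤ a ^ q := Real.rpow_le_rpow hb h hq0.le
    have h2 := rpow_sub_rpow_le hq hb h
    have h3 : |a ^ q - b ^ q| = a ^ q - b ^ q := abs_of_nonneg (by linarith)
    have h4 : |a - b| = a - b := abs_of_nonneg (by linarith)
    have h5 : 0 ≤ a ^ (q - 1) := Real.rpow_nonneg ha _
    have h6 : 0 ≤ b ^ (q - 1) := Real.rpow_nonneg hb _
    have h7 : 0 ≤ q * (b ^ (q - 1)) * (a - b) :=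
      mul_nonneg (mul_nonneg hq0.le h6) (by linarith)
    rw [h3, h4]
    nlinarith [h2, h7]

variable {Ω : Type*} {m0 : MeasurableSpace Ω} {μ : Measure Ω} [IsProbabilityMeasure μ]

/-- Conditional Jensen inequality for `rpow`. -/
lemma condexp_rpow_jensen {m : MeasurableSpace Ω} (hm : m ≤ m0) {ρ : ℝ} (hρ : 1 ≤ ρ)
    {G : Ω → ℝ} (hG : Integrable G μ) (hG0 : 0 ≤ᵐ[μ] G)
    (hGρ : Integrable (fun ω => G ω ^ ρ) μ) :
    ∀ᵐ ω ∂μ, (μ[G|m]) ω ^ ρ ≤ (μ[fun ω' => G ω' ^ ρ|m]) ω := by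
  have key : ∀ c : ℚ, 0 < (c:ℝ) →
      ∀ᵐ ω ∂μ, (1 - ρ) * (c:ℝ) ^ ρ + ρ * (c:ℝ) ^ (ρ - 1) * (μ[G|m]) ω
        ≤ (μ[fun ω' => G ω' ^ ρ|m]) ω := by
    intro c hc
    have hpt : (fun ω => (1 - ρ) * (c:ℝ) ^ ρ + ρ * (c:ℝ) ^ (ρ - 1) * G ω)
        ≤ᵐ[μ] fun ω => G ω ^ ρ := by
      filter_upwards [hG0] with ω hω
      exact tangent_rpow hρ hω hc
    have hint : Integrable (fun ω => (1 - ρ) * (c:ℝ) ^ ρ + ρ * (c:ℝ) ^ (ρ - 1) * G ω) μ :=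
      (integrable_const _).add (hG.const_mul _)
    have hmono := condExp_mono (m := m) hint hGρ hpt
    have heq : μ[fun ω => (1 - ρ) * (c:ℝ) ^ ρ + ρ * (c:ℝ) ^ (ρ - 1) * G ω|m]
        =ᵐ[μ] fun ω => (1 - ρ) * (c:ℝ) ^ ρ + ρ * (c:ℝ) ^ (ρ - 1) * (μ[G|m]) ω := by
      have hA : (fun ω => (1 - ρ) * (c:ℝ) ^ ρ + ρ * (c:ℝ) ^ (ρ - 1) * G ω)
          = (fun _ : Ω => (1 - ρ) * (c:ℝ) ^ ρ) + (ρ * (c:ℝ) ^ (ρ - 1)) • G := by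
        funext ω'; simp [smul_eq_mul]
      rw [hA]
      refine (condExp_add (integrable_const _) (hG.smul _) _).trans ?_
      have h2 := condExp_smul (μ := μ) (m := m) (ρ * (c:ℝ) ^ (ρ - 1)) G
      have h3 := condExp_const (μ := μ) hm ((1 - ρ) * (c:ℝ) ^ ρ)
      filter_upwards [h2] with ω hω2
      simp only [Pi.add_apply, h3, hω2, Pi.smul_apply, smul_eq_mul]
    filter_upwards [hmono, heq] with ω h1 h2
    rw [← h2]; exact h1
  have hkey : ∀ᵐ ω ∂μ, ∀ c : ℚ, 0 < (c:ℝ) →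
      (1 - ρ) * (c:ℝ) ^ ρ + ρ * (c:ℝ) ^ (ρ - 1) * (μ[G|m]) ω
        ≤ (μ[fun ω' => G ω' ^ ρ|m]) ω := by
    rw [ae_all_iff]
    intro c
    by_cases hc : 0 < (c:ℝ)
    · filter_upwards [key c hc] with ω h _; exact h
    · filter_upwards with ω h; exact absurd h hc
  filter_upwards [hkey, condExp_nonneg hG0] with ω hω hω0
  simp only [Pi.zero_apply] at hω0
  set x := (μ[G|m]) ω with hx
  set F := (μ[fun ω' => G ω' ^ ρ|m]) ω with hF
  rcases eq_or_lt_of_le hρ with hρ1 | hρ1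
  · -- ρ = 1
    have := hω 1 (by norm_num)
    rw [← hρ1] at this ⊢
    simpa using this
  · -- ρ > 1 : take rationals c ↓ x
    have hc : ∀ n : ℕ, ∃ c : ℚ, x < (c:ℝ) ∧ (c:ℝ) < x + 1 / (n + 1) := by
      intro n
      have : (0:ℝ) < 1 / (n + 1) := by positivity
      exact_mod_cast exists_rat_btwn (by linarith : x < x + 1 / (n+1))
    choose c hc1 hc2 using hc
    have hctend : Tendsto (fun n => ((c n : ℝ))) atTop (𝓝 x) := by
      have h1 : Tendsto (fun n : ℕ => x + 1 / (n + 1)) atTop (𝓝 x) := by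
        have := tendsto_one_div_add_atTop_nhds_zero_nat (𝕜 := ℝ)
        have h2 := this.const_add x
        simpa using h2
      exact tendsto_of_tendsto_of_tendsto_of_le_of_le tendsto_const_nhds h1
        (fun n => (hc1 n).le) (fun n => (hc2 n).le)
    have hcont1 : ContinuousAt (fun y : ℝ => y ^ ρ) x :=
      Real.continuousAt_rpow_const x ρ (Or.inr (by linarith))
    have hcont2 : ContinuousAt (fun y : ℝ => y ^ (ρ - 1)) x :=
      Real.continuousAt_rpow_const x (ρ - 1) (Or.inr (by linarith))
    have htend : Tendsto (fun n => (1 - ρ) * (c n : ℝ) ^ ρ + ρ * (c n : ℝ) ^ (ρ - 1) * x)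
        atTop (𝓝 ((1 - ρ) * x ^ ρ + ρ * x ^ (ρ - 1) * x)) := by
      exact (((hcont1.tendsto.comp hctend).const_mul _).add
        (((hcont2.tendsto.comp hctend).const_mul _).mul_const _))
    have hlim : (1 - ρ) * x ^ ρ + ρ * x ^ (ρ - 1) * x = x ^ ρ := by
      rcases eq_or_lt_of_le hω0 with h0 | h0
      · have hz : (0:ℝ) ^ ρ = 0 := Real.zero_rpow (by linarith)
        rw [← h0]
        simp [hz]
      · have hxx : x ^ (ρ - 1) * x = x ^ ρ := by
          rw [Real.rpow_sub h0, Real.rpow_one]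
          exact div_mul_cancel₀ _ h0.ne'
        linear_combination ρ * hxx
    rw [← hlim]
    exact le_of_tendsto htend (Filter.Eventually.of_forall fun n =>
      hω (c n) (lt_of_le_of_lt hω0 (hc1 n)))



variable {Ω : Type*} {m0 : MeasurableSpace Ω} {μ : Measure Ω} [IsProbabilityMeasure μ]

/-- `L^r` contraction property of conditional expectation, for nonnegative functions. -/
lemma eLpNorm_condexp_le {m : MeasurableSpace Ω} (hm : m ≤ m0) {r : ℝ≥0∞} (hr : 1 ≤ r)
    {G : Ω → ℝ} (hG : Integrable G μ) (hG0 : 0 ≤ᵐ[μ] G) :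
    eLpNorm (μ[G|m]) r μ ≤ eLpNorm G r μ := by
  by_cases htop : eLpNorm G r μ = ∞
  · exact htop ▸ le_top
  have hr0 : r ≠ 0 := by
    intro h; rw [h] at hr; exact (not_le.mpr zero_lt_one) hr
  rcases eq_or_ne r ∞ with hrtop | hrtop
  · subst hrtop
    set C := (eLpNorm G ∞ μ).toReal with hC
    have hbound : ∀ᵐ ω ∂μ, ‖G ω‖ ≤ C := by
      filter_upwards [ae_le_eLpNormEssSup (f := G) (μ := μ)] with ω hω
      have h1 : (‖G ω‖₊ : ℝ≥0∞) ≤ eLpNorm G ∞ μ := by rwa [eLpNorm_exponent_top]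
      have h2 := ENNReal.toReal_mono htop h1
      simpa [hC] using h2
    have hGle : G ≤ᵐ[μ] fun _ => C := by
      filter_upwards [hbound] with ω hω
      exact (le_abs_self _).trans (by rwa [Real.norm_eq_abs] at hω)
    have h1 : μ[G|m] ≤ᵐ[μ] μ[fun _ => C|m] := condExp_mono (m := m) hG (integrable_const C) hGle
    have h2 : μ[fun _ : Ω => C|m] = fun _ => C := condExp_const hm C
    have h3 : ∀ᵐ ω ∂μ, ‖(μ[G|m]) ω‖ ≤ C := by
      filter_upwards [h1, condExp_nonneg (m := m) hG0] with ω hω1 hω2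
      simp only [Pi.zero_apply] at hω2
      rw [h2] at hω1
      rw [Real.norm_eq_abs, abs_of_nonneg hω2]
      exact hω1
    calc eLpNorm (μ[G|m]) ∞ μ ≤ μ Set.univ ^ (∞ : ℝ≥0∞).toReal⁻¹ * ENNReal.ofReal C :=
          eLpNorm_le_of_ae_bound h3
      _ = eLpNorm G ∞ μ := by
          rw [hC, ENNReal.ofReal_toReal htop]; simp [measure_univ]
  · set ρ := r.toReal with hρdef
    have hρ : 1 ≤ ρ := by
      rw [hρdef, ← ENNReal.toReal_one]
      exact ENNReal.toReal_mono hrtop hr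
    have hρ0 : (0:ℝ) < ρ := lt_of_lt_of_le zero_lt_one hρ
    have hGr : MemLp G r μ := ⟨hG.aestronglyMeasurable, lt_top_iff_ne_top.mpr htop⟩
    have hGρ : Integrable (fun ω => G ω ^ ρ) μ := by
      refine (hGr.integrable_norm_rpow hr0 hrtop).congr ?_
      filter_upwards [hG0] with ω hω
      rw [Real.norm_eq_abs, abs_of_nonneg hω]
    have hρae : 0 ≤ᵐ[μ] fun ω => G ω ^ ρ := by
      filter_upwards [hG0] with ω hω
      exact Real.rpow_nonneg hω _
    have hjen := condexp_rpow_jensen hm hρ hG hG0 hGρ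
    have hcondnn : 0 ≤ᵐ[μ] μ[fun ω => G ω ^ ρ|m] := condExp_nonneg hρae
    rw [eLpNorm_eq_lintegral_rpow_enorm_toReal hr0 hrtop, eLpNorm_eq_lintegral_rpow_enorm_toReal hr0 hrtop]
    refine ENNReal.rpow_le_rpow ?_ (by positivity)
    calc ∫⁻ ω, (‖(μ[G|m]) ω‖₊ : ℝ≥0∞) ^ r.toReal ∂μ
        ≤ ∫⁻ ω, ENNReal.ofReal ((μ[fun ω' => G ω' ^ ρ|m]) ω) ∂μ := by
          refine lintegral_mono_ae ?_
          filter_upwards [hjen, condExp_nonneg (m := m) hG0] with ω hω1 hω2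
          simp only [Pi.zero_apply] at hω2
          rw [← enorm_eq_nnnorm, Real.enorm_eq_ofReal hω2, ENNReal.ofReal_rpow_of_nonneg hω2 hρ0.le]
          exact ENNReal.ofReal_le_ofReal hω1
      _ = ENNReal.ofReal (∫ ω, (μ[fun ω' => G ω' ^ ρ|m]) ω ∂μ) :=
          (MeasureTheory.ofReal_integral_eq_lintegral_ofReal integrable_condExp hcondnn).symm
      _ = ENNReal.ofReal (∫ ω, G ω ^ ρ ∂μ) := by rw [integral_condExp hm]
      _ = ∫⁻ ω, ENNReal.ofReal (G ω ^ ρ) ∂μ :=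
          MeasureTheory.ofReal_integral_eq_lintegral_ofReal hGρ hρae
      _ = ∫⁻ ω, (‖G ω‖₊ : ℝ≥0∞) ^ r.toReal ∂μ := by
          refine lintegral_congr_ae ?_
          filter_upwards [hG0] with ω hω
          rw [← enorm_eq_nnnorm, Real.enorm_eq_ofReal hω, ENNReal.ofReal_rpow_of_nonneg hω hρ0.le]

variable (ℱ : MeasureTheory.Filtration ℝ m0) {E : Type*} [NormedAddCommGroup E]

/-- Monotonicity of `condLqrs` in the base time. -/
lemma condLqrs_mono_base {q : ℝ} (hq : 1 ≤ q) {r : ℝ≥0∞} (hr : 1 ≤ r) {s u : ℝ}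
    (hsu : s ≤ u) (Z : Ω → E) :
    condLqrs μ ℱ q r s Z ≤ condLqrs μ ℱ q r u Z := by
  have hq0 : (0:ℝ) < q := lt_of_lt_of_le zero_lt_one hq
  unfold condLqrs
  refine ENNReal.rpow_le_rpow ?_ (one_div_nonneg.mpr hq0.le)
  have htower : μ[(fun ω => ‖Z ω‖ ^ q)|ℱ s]
      =ᵐ[μ] μ[μ[(fun ω => ‖Z ω‖ ^ q)|ℱ u]|ℱ s] :=
    (condExp_condExp_of_le (ℱ.mono hsu) (ℱ.le u)).symm
  rw [eLpNorm_congr_ae htower]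
  exact eLpNorm_condexp_le (ℱ.le s) hr integrable_condExp
    (condExp_nonneg (Filter.Eventually.of_forall fun ω => Real.rpow_nonneg (norm_nonneg _) _))

/-- `condLqrs` only depends on the norm of the difference; flip version. -/
lemma condLqrs_sub_comm (q : ℝ) (r : ℝ≥0∞) (s : ℝ) (A B : Ω → E) :
    condLqrs μ ℱ q r s (fun ω => A ω - B ω) = condLqrs μ ℱ q r s (fun ω => B ω - A ω) := by
  have h : (fun ω => ‖A ω - B ω‖ ^ q) = fun ω => ‖B ω - A ω‖ ^ q := by
    funext ω; rw [norm_sub_rev]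
  unfold condLqrs
  rw [h]

/-- `condLqrs` of the zero increment vanishes. -/
lemma condLqrs_self (q : ℝ) (hq : 1 ≤ q) (r : ℝ≥0∞) (s : ℝ) (Z : Ω → E) :
    condLqrs μ ℱ q r s (fun ω => Z ω - Z ω) = 0 := by
  have hq0 : (0:ℝ) < q := lt_of_lt_of_le zero_lt_one hq
  have h : (fun ω => ‖Z ω - Z ω‖ ^ q) = (0 : Ω → ℝ) := by
    funext ω; simp [Real.zero_rpow hq0.ne']
  unfold condLqrs
  rw [h, condExp_zero, eLpNorm_zero, ENNReal.zero_rpow_of_pos (by positivity)]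

/-- The `L^q` norm is dominated by the `L^{q,r}_s` norm. -/
lemma eLpNorm_le_condLqrs {q : ℝ} (hq : 1 ≤ q) {r : ℝ≥0∞} (hr : 1 ≤ r) {Z : Ω → E}
    (hint : Integrable (fun ω => ‖Z ω‖ ^ q) μ) (hZ : AEStronglyMeasurable Z μ) (s : ℝ) :
    eLpNorm Z (ENNReal.ofReal q) μ ≤ condLqrs μ ℱ q r s Z := by
  have hq0 : (0:ℝ) < q := lt_of_lt_of_le zero_lt_one hq
  set f := fun ω => ‖Z ω‖ ^ q with hf
  have hf0 : 0 ≤ᵐ[μ] f := Filter.Eventually.of_forall fun ω => Real.rpow_nonneg (norm_nonneg _) _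
  have h1 : eLpNorm Z (ENNReal.ofReal q) μ = (ENNReal.ofReal (∫ ω, f ω ∂μ)) ^ (1/q) := by
    rw [eLpNorm_eq_lintegral_rpow_enorm_toReal (by simp [hq0]) ENNReal.ofReal_ne_top,
      ENNReal.toReal_ofReal hq0.le]
    congr 1
    rw [MeasureTheory.ofReal_integral_eq_lintegral_ofReal hint hf0]
    refine lintegral_congr fun ω => ?_
    rw [← ofReal_norm_eq_enorm, ENNReal.ofReal_rpow_of_nonneg (norm_nonneg _) hq0.le]
  have h2 : ENNReal.ofReal (∫ ω, f ω ∂μ) = eLpNorm (μ[f|ℱ s]) 1 μ := by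
    rw [eLpNorm_one_eq_lintegral_enorm, ← integral_condExp (ℱ.le s),
      MeasureTheory.ofReal_integral_eq_lintegral_ofReal integrable_condExp (condExp_nonneg hf0)]
    refine lintegral_congr_ae ?_
    filter_upwards [condExp_nonneg (m := ℱ s) hf0] with ω hω
    simp only [Pi.zero_apply] at hω
    rw [Real.enorm_eq_ofReal hω]
  rw [h1, h2]
  unfold condLqrs
  refine ENNReal.rpow_le_rpow ?_ (one_div_nonneg.mpr hq0.le)
  exact eLpNorm_le_eLpNorm_of_exponent_le hr
    (stronglyMeasurable_condExp.mono (ℱ.le s)).aestronglyMeasurable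




/-- The one-interval partition. -/
def onePart (a b : ℝ) (hab : a < b) : IntervalPartition a b where
  n := 1
  pt := fun i => if i = 0 then a else b
  h0 := by simp
  hn := by simp
  mono := by
    intro i hi
    have : i = 0 := Nat.lt_one_iff.mp hi
    subst this
    simpa using hab

/-- Append a point to a partition. -/
def _root_.IntervalPartition.snoc {a b : ℝ} (P : IntervalPartition a b) (c : ℝ) (hbc : b < c) : IntervalPartition a c where
  n := P.n + 1
  pt := fun i => if i ≤ P.n then P.pt i else c
  h0 := by simp only [if_pos (Nat.zero_le _), P.h0]
  hn := by simp only [if_neg (by omega : ¬ (P.n + 1 ≤ P.n))]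
  mono := by
    intro i hi
    rcases lt_or_eq_of_le (Nat.lt_succ_iff.mp hi) with h | h
    · have h1 : i ≤ P.n := le_of_lt h
      have h2 : i + 1 ≤ P.n := h
      simp only [if_pos h1, if_pos h2]
      exact P.mono i h
    · subst h
      simp only [if_pos (le_refl P.n), if_neg (by omega : ¬ (P.n + 1 ≤ P.n))]
      rw [P.hn]
      exact hbc

lemma snoc_sum {a b : ℝ} (P : IntervalPartition a b) (c : ℝ) (hbc : b < c) (g : ℝ → ℝ → ℝ≥0∞) :
    ∑ i ∈ Finset.range (P.snoc c hbc).n,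
        g ((P.snoc c hbc).pt i) ((P.snoc c hbc).pt (i + 1))
      = (∑ i ∈ Finset.range P.n, g (P.pt i) (P.pt (i + 1))) + g b c := by
  show ∑ i ∈ Finset.range (P.n + 1), _ = _
  rw [Finset.sum_range_succ]
  congr 1
  · refine Finset.sum_congr rfl fun i hi => ?_
    have hi' := Finset.mem_range.mp hi
    have h1 : i ≤ P.n := le_of_lt hi'
    have h2 : i + 1 ≤ P.n := hi'
    simp only [IntervalPartition.snoc, if_pos h1, if_pos h2]
  · simp only [IntervalPartition.snoc, if_pos (le_refl P.n), if_neg (by omega : ¬ (P.n + 1 ≤ P.n)), P.hn]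

variable {Ω : Type*} {m0 : MeasurableSpace Ω} (μ : Measure Ω) [IsProbabilityMeasure μ]
  (ℱ : MeasureTheory.Filtration ℝ m0) {E : Type*} [NormedAddCommGroup E]

/-- The sum functional whose supremum is `pqrVar^p`. -/
def phi (p q : ℝ) (r : ℝ≥0∞) (Y : ℝ → Ω → E) (v : ℝ) : ℝ≥0∞ :=
  ⨆ P : IntervalPartition 0 v, ∑ i ∈ Finset.range P.n,
    (condLqrs μ ℱ q r (P.pt i) (fun ω => Y (P.pt (i + 1)) ω - Y (P.pt i) ω)) ^ p

variable {p q : ℝ} {r : ℝ≥0∞} {Y : ℝ → Ω → E} {T : ℝ}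

lemma phi_superadd (hp : 1 ≤ p) (hq : 1 ≤ q) {u v : ℝ} (hu : 0 < u) (huv : u ≤ v) :
    phi μ ℱ p q r Y u + (condLqrs μ ℱ q r u (fun ω => Y v ω - Y u ω)) ^ p
      ≤ phi μ ℱ p q r Y v := by
  have hp0 : (0:ℝ) < p := lt_of_lt_of_le zero_lt_one hp
  rcases eq_or_lt_of_le huv with h | hlt
  · subst h
    rw [condLqrs_self ℱ q hq r u (Y u), ENNReal.zero_rpow_of_pos hp0, add_zero]
  · have hne : Nonempty (IntervalPartition 0 u) := ⟨onePart 0 u hu⟩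
    rw [phi, ENNReal.iSup_add]
    refine iSup_le fun P => ?_
    rw [← snoc_sum P v hlt (fun a b => (condLqrs μ ℱ q r a (fun ω => Y b ω - Y a ω)) ^ p)]
    exact le_iSup (fun P' : IntervalPartition 0 v => ∑ i ∈ Finset.range P'.n,
      (condLqrs μ ℱ q r (P'.pt i) (fun ω => Y (P'.pt (i + 1)) ω - Y (P'.pt i) ω)) ^ p)
      (P.snoc v hlt)

lemma phi_mono (hp : 1 ≤ p) (hq : 1 ≤ q) {u v : ℝ} (hu : 0 < u) (huv : u ≤ v) :
    phi μ ℱ p q r Y u ≤ phi μ ℱ p q r Y v :=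
  le_trans le_self_add (phi_superadd μ ℱ hp hq hu huv)

lemma phi_le (hp : 1 ≤ p) (hq : 1 ≤ q) (hT : 0 < T) {v : ℝ} (hv : 0 < v) (hvT : v ≤ T) :
    phi μ ℱ p q r Y v ≤ (pqrVar μ ℱ p q r Y 0 T) ^ p := by
  have hp0 : (0:ℝ) < p := lt_of_lt_of_le zero_lt_one hp
  refine le_trans (phi_mono μ ℱ hp hq hv hvT) ?_
  refine iSup_le fun P => ?_
  have h1 : (∑ i ∈ Finset.range P.n,
      (condLqrs μ ℱ q r (P.pt i) (fun ω => Y (P.pt (i + 1)) ω - Y (P.pt i) ω)) ^ p)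
      = ((∑ i ∈ Finset.range P.n,
      (condLqrs μ ℱ q r (P.pt i) (fun ω => Y (P.pt (i + 1)) ω - Y (P.pt i) ω)) ^ p) ^ (1/p)) ^ p := by
    rw [← ENNReal.rpow_mul, one_div, inv_mul_cancel₀ hp0.ne', ENNReal.rpow_one]
  rw [h1]
  refine ENNReal.rpow_le_rpow ?_ hp0.le
  exact le_iSup (fun P' : IntervalPartition 0 T => (∑ i ∈ Finset.range P'.n,
      (condLqrs μ ℱ q r (P'.pt i) (fun ω => Y (P'.pt (i + 1)) ω - Y (P'.pt i) ω)) ^ p) ^ (1/p)) P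

/-- Cauchy criterion approaching `t` from the left. -/
lemma cauchy_left (hp : 1 ≤ p) (hq : 1 ≤ q) (hT : 0 < T)
    {s t : ℝ} (hs : 0 ≤ s) (hst : s < t) (htT : t ≤ T)
    (hfin : pqrVar μ ℱ p q r Y 0 T ≠ ∞) {ε : ℝ≥0∞} (hε : 0 < ε) :
    ∃ w, s < w ∧ w < t ∧ ∀ u v, w ≤ u → u ≤ v → v < t →
      condLqrs μ ℱ q r u (fun ω => Y v ω - Y u ω) ≤ ε := by
  have hp0 : (0:ℝ) < p := lt_of_lt_of_le zero_lt_one hp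
  have hεp : (0:ℝ≥0∞) < ε ^ p := by
    rw [pos_iff_ne_zero]
    intro h
    rcases ENNReal.rpow_eq_zero_iff.mp h with ⟨h1, _⟩ | ⟨_, h2⟩
    · exact hε.ne' h1
    · linarith
  set B := (pqrVar μ ℱ p q r Y 0 T) ^ p with hBdef
  have hB : B ≠ ∞ := ENNReal.rpow_ne_top_of_nonneg hp0.le hfin
  set S := ⨆ w ∈ Set.Ioo s t, phi μ ℱ p q r Y w with hSdef
  have hSB : S ≤ B := by
    refine iSup₂_le fun w hw => ?_
    exact phi_le μ ℱ hp hq hT (lt_of_le_of_lt hs hw.1) (le_trans hw.2.le htT)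
  have hSne : S ≠ ∞ := (lt_of_le_of_lt hSB hB.lt_top).ne
  rcases eq_or_ne S 0 with hS0 | hSpos
  · refine ⟨(s + t) / 2, by linarith, by linarith, ?_⟩
    intro u v huw huv hvt
    have hus : s < u := lt_of_lt_of_le (by linarith) huw
    have hu0 : 0 < u := lt_of_le_of_lt hs hus
    have hvmem : v ∈ Set.Ioo s t := ⟨lt_of_lt_of_le hus huv, hvt⟩
    have hphiv : phi μ ℱ p q r Y v ≤ S := le_iSup₂ (f := fun w _ => phi μ ℱ p q r Y w) v hvmem
    have hsup := phi_superadd μ ℱ (Y := Y) (r := r) hp hq hu0 huv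
    have hc0 : (condLqrs μ ℱ q r u (fun ω => Y v ω - Y u ω)) ^ p = 0 := by
      have h := le_trans le_add_self (hsup.trans (hphiv.trans_eq hS0))
      exact le_antisymm h zero_le
    have : condLqrs μ ℱ q r u (fun ω => Y v ω - Y u ω) = 0 := by
      rcases ENNReal.rpow_eq_zero_iff.mp hc0 with ⟨h1, _⟩ | ⟨_, h2⟩
      · exact h1
      · linarith
    rw [this]
    exact zero_le
  · set δ := min (ε ^ p) S with hδdef
    have hδ0 : δ ≠ 0 := by
      rw [hδdef, ← pos_iff_ne_zero, lt_min_iff]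
      exact ⟨hεp, hSpos.bot_lt⟩
    have hlt : S - δ < S := ENNReal.sub_lt_self hSne hSpos hδ0
    obtain ⟨w, hw, hphiw⟩ : ∃ w ∈ Set.Ioo s t, S - δ < phi μ ℱ p q r Y w := by
      by_contra h
      push_neg at h
      exact absurd (iSup₂_le h : S ≤ S - δ) hlt.not_ge
    refine ⟨w, hw.1, hw.2, ?_⟩
    intro u v huw huv hvt
    have hu0 : 0 < u := lt_of_le_of_lt hs (lt_of_lt_of_le hw.1 huw)
    have h1 := phi_superadd μ ℱ (Y := Y) (r := r) hp hq hu0 huv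
    have hvmem : v ∈ Set.Ioo s t := ⟨lt_of_lt_of_le (lt_of_lt_of_le hw.1 huw) huv, hvt⟩
    have h2 : phi μ ℱ p q r Y v ≤ S := le_iSup₂ (f := fun w' _ => phi μ ℱ p q r Y w') v hvmem
    have h3 : phi μ ℱ p q r Y w ≤ phi μ ℱ p q r Y u :=
      phi_mono μ ℱ hp hq (lt_of_le_of_lt hs hw.1) huw
    have hc : (condLqrs μ ℱ q r u (fun ω => Y v ω - Y u ω)) ^ p ≤ δ := by
      by_contra hcc
      push_neg at hcc
      have h4 := ENNReal.add_lt_add (lt_of_lt_of_le hphiw h3) hcc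
      rw [tsub_add_cancel_of_le (min_le_right _ _)] at h4
      exact lt_irrefl S (lt_of_lt_of_le h4 (h1.trans h2))
    have hc2 : (condLqrs μ ℱ q r u (fun ω => Y v ω - Y u ω)) ^ p ≤ ε ^ p :=
      hc.trans (min_le_left _ _)
    exact (ENNReal.rpow_le_rpow_iff hp0).mp hc2

/-- Cauchy criterion approaching `t` from the right. -/
lemma cauchy_right (hp : 1 ≤ p) (hq : 1 ≤ q) (hT : 0 < T)
    {t : ℝ} (ht : 0 ≤ t) (htT : t < T)
    (hfin : pqrVar μ ℱ p q r Y 0 T ≠ ∞) {ε : ℝ≥0∞} (hε : 0 < ε) :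
    ∃ w, t < w ∧ w ≤ T ∧ ∀ u v, t < u → u ≤ v → v ≤ w →
      condLqrs μ ℱ q r u (fun ω => Y v ω - Y u ω) ≤ ε := by
  have hp0 : (0:ℝ) < p := lt_of_lt_of_le zero_lt_one hp
  have hεp : (0:ℝ≥0∞) < ε ^ p := by
    rw [pos_iff_ne_zero]
    intro h
    rcases ENNReal.rpow_eq_zero_iff.mp h with ⟨h1, _⟩ | ⟨_, h2⟩
    · exact hε.ne' h1
    · linarith
  set B := (pqrVar μ ℱ p q r Y 0 T) ^ p with hBdef
  have hB : B ≠ ∞ := ENNReal.rpow_ne_top_of_nonneg hp0.le hfin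
  set I := ⨅ w ∈ Set.Ioc t T, phi μ ℱ p q r Y w with hIdef
  have hIB : I ≤ B := by
    refine le_trans (iInf₂_le T ⟨htT, le_refl T⟩) ?_
    exact phi_le μ ℱ hp hq hT hT le_rfl
  have hIne : I ≠ ∞ := (lt_of_le_of_lt hIB hB.lt_top).ne
  have hlt : I < I + ε ^ p := ENNReal.lt_add_right hIne hεp.ne'
  obtain ⟨w, hw, hphiw⟩ : ∃ w ∈ Set.Ioc t T, phi μ ℱ p q r Y w < I + ε ^ p := by
    by_contra h
    push_neg at h
    exact absurd (le_iInf₂ h : I + ε ^ p ≤ I) hlt.not_ge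
  refine ⟨w, hw.1, hw.2, ?_⟩
  intro u v htu huv hvw
  have hu0 : 0 < u := lt_of_le_of_lt ht htu
  have h1 := phi_superadd μ ℱ (Y := Y) (r := r) hp hq hu0 huv
  have h2 : phi μ ℱ p q r Y v ≤ phi μ ℱ p q r Y w :=
    phi_mono μ ℱ hp hq (lt_of_lt_of_le hu0 huv) hvw
  have h3 : I ≤ phi μ ℱ p q r Y u :=
    iInf₂_le u ⟨htu, le_trans huv (hvw.trans hw.2)⟩
  have hc : (condLqrs μ ℱ q r u (fun ω => Y v ω - Y u ω)) ^ p < ε ^ p := by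
    have h4 : I + (condLqrs μ ℱ q r u (fun ω => Y v ω - Y u ω)) ^ p
        ≤ phi μ ℱ p q r Y w := le_trans (add_le_add h3 le_rfl) (h1.trans h2)
    exact (ENNReal.add_lt_add_iff_left hIne).mp (lt_of_le_of_lt h4 hphiw)
  exact (ENNReal.rpow_le_rpow_iff hp0).mp hc.le



variable {Ω : Type*} {m0 : MeasurableSpace Ω} {μ : Measure Ω} [IsProbabilityMeasure μ]
  {E : Type*} [NormedAddCommGroup E]

lemma aesm_norm_rpow {q : ℝ} (hq : 1 ≤ q) {Z : Ω → E} (hZ : AEStronglyMeasurable Z μ) :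
    AEStronglyMeasurable (fun ω => ‖Z ω‖ ^ q) μ :=
  (Real.continuous_rpow_const (le_trans zero_le_one hq)).comp_aestronglyMeasurable hZ.norm

/-- `eLpNorm` with exponent `ofReal q` expressed via a lintegral of `‖·‖₊ ^ q`. -/
lemma eLpNorm_ofReal_eq {q : ℝ} (hq : 1 ≤ q) (Z : Ω → E) :
    eLpNorm Z (ENNReal.ofReal q) μ
      = (∫⁻ ω, ((‖Z ω‖₊ : ℝ≥0∞)) ^ q ∂μ) ^ (1/q) := by
  have hq0 : (0:ℝ) < q := lt_of_lt_of_le zero_lt_one hq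
  rw [eLpNorm_eq_lintegral_rpow_enorm_toReal (by simp [hq0]) ENNReal.ofReal_ne_top,
    ENNReal.toReal_ofReal hq0.le]
  simp only [enorm_eq_nnnorm]

lemma lintegral_nnnorm_rpow_eq {q : ℝ} (hq : 1 ≤ q) (Z : Ω → E) :
    ∫⁻ ω, ((‖Z ω‖₊ : ℝ≥0∞)) ^ q ∂μ = (eLpNorm Z (ENNReal.ofReal q) μ) ^ q := by
  have hq0 : (0:ℝ) < q := lt_of_lt_of_le zero_lt_one hq
  rw [eLpNorm_ofReal_eq hq, ← ENNReal.rpow_mul, one_div, inv_mul_cancel₀ hq0.ne',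
    ENNReal.rpow_one]

lemma memLp_of_integrable_rpow {q : ℝ} (hq : 1 ≤ q) {Z : Ω → E}
    (hZ : AEStronglyMeasurable Z μ) (hint : Integrable (fun ω => ‖Z ω‖ ^ q) μ) :
    MemLp Z (ENNReal.ofReal q) μ := by
  have hq0 : (0:ℝ) < q := lt_of_lt_of_le zero_lt_one hq
  refine ⟨hZ, ?_⟩
  rw [eLpNorm_ofReal_eq hq]
  refine ENNReal.rpow_lt_top_of_nonneg (by positivity) ?_
  have h := hint.2
  have h' : ∫⁻ ω, ((‖(‖Z ω‖ ^ q)‖₊ : ℝ≥0∞)) ∂μ < ∞ := h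
  refine (lt_of_le_of_lt (le_of_eq (lintegral_congr fun ω => ?_)) h').ne
  rw [← enorm_eq_nnnorm, ← enorm_eq_nnnorm, Real.enorm_eq_ofReal (Real.rpow_nonneg (norm_nonneg _) _),
    ← ofReal_norm_eq_enorm, ENNReal.ofReal_rpow_of_nonneg (norm_nonneg _) hq0.le]

lemma integrable_rpow_of_memLp {q : ℝ} (hq : 1 ≤ q) {Z : Ω → E}
    (hZ : MemLp Z (ENNReal.ofReal q) μ) : Integrable (fun ω => ‖Z ω‖ ^ q) μ := by
  have hq0 : (0:ℝ) < q := lt_of_lt_of_le zero_lt_one hq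
  have := hZ.integrable_norm_rpow (by simp [hq0]) ENNReal.ofReal_ne_top
  rwa [ENNReal.toReal_ofReal hq0.le] at this

/-- An auxiliary bound: `x ^ e ≤ max 1 x` for `e ∈ [0,1]`, in `ℝ≥0∞`. -/
lemma rpow_le_max_one {x : ℝ≥0∞} {e : ℝ} (he0 : 0 ≤ e) (he1 : e ≤ 1) :
    x ^ e ≤ max 1 x := by
  rcases le_total x 1 with h | h
  · refine le_trans ?_ (le_max_left _ _)
    calc x ^ e ≤ 1 ^ e := ENNReal.rpow_le_rpow h he0
      _ = 1 := ENNReal.one_rpow e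
  · refine le_trans ?_ (le_max_right _ _)
    calc x ^ e ≤ x ^ (1:ℝ) := ENNReal.rpow_le_rpow_of_exponent_le h he1
      _ = x := ENNReal.rpow_one x

/-- L¹ convergence of `‖W_j‖^q` to `‖W‖^q` from `L^q` convergence of `W_j` to `W`. -/
lemma tendsto_eLpNorm_one_norm_rpow {q : ℝ} (hq : 1 ≤ q) {W : Ω → E} {Ws : ℕ → Ω → E}
    (hWs : ∀ j, AEStronglyMeasurable (Ws j) μ) (hW : AEStronglyMeasurable W μ)
    (hWfin : eLpNorm W (ENNReal.ofReal q) μ ≠ ∞)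
    (hconv : Tendsto (fun j => eLpNorm (fun ω => Ws j ω - W ω) (ENNReal.ofReal q) μ)
      atTop (𝓝 0)) :
    Tendsto (fun j => eLpNorm (fun ω => ‖Ws j ω‖ ^ q - ‖W ω‖ ^ q) 1 μ) atTop (𝓝 0) := by
  have hq0 : (0:ℝ) < q := lt_of_lt_of_le zero_lt_one hq
  have hq'1 : (1:ℝ≥0∞) ≤ ENNReal.ofReal q := by
    rw [← ENNReal.ofReal_one]; exact ENNReal.ofReal_le_ofReal hq
  set q' := ENNReal.ofReal q with hq'def
  set D := fun j => eLpNorm (fun ω => Ws j ω - W ω) q' μ with hDdef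
  set C := eLpNorm W q' μ + 1 with hCdef
  have hC : C ≠ ∞ := ENNReal.add_ne_top.mpr ⟨hWfin, ENNReal.one_ne_top⟩
  have hCq : C ^ q ≠ ∞ := ENNReal.rpow_ne_top_of_nonneg hq0.le hC
  set M := ENNReal.ofReal q * (2 * max 1 (C ^ q)) with hMdef
  have hM : M ≠ ∞ := by
    refine ENNReal.mul_ne_top ENNReal.ofReal_ne_top (ENNReal.mul_ne_top (by simp) ?_)
    rw [ne_eq, max_eq_top]
    push_neg
    exact ⟨ENNReal.one_ne_top, hCq⟩
  have hM1 : (1:ℝ≥0∞) ≤ M := by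
    have h2 : (1:ℝ≥0∞) ≤ 2 * max 1 (C ^ q) := by
      calc (1:ℝ≥0∞) ≤ 2 * 1 := by norm_num
        _ ≤ 2 * max 1 (C ^ q) := mul_le_mul_right (le_max_left _ _) 2
    calc (1:ℝ≥0∞) = 1 * 1 := (one_mul 1).symm
      _ ≤ M := mul_le_mul' hq'1 h2
  -- eventual bound on T j
  have hDle : ∀ᶠ j in atTop, D j ≤ 1 := by
    rw [ENNReal.tendsto_nhds_zero] at hconv
    exact hconv 1 zero_lt_one
  have hbnd : ∀ᶠ j in atTop,
      eLpNorm (fun ω => ‖Ws j ω‖ ^ q - ‖W ω‖ ^ q) 1 μ ≤ M * D j := by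
    filter_upwards [hDle] with j hDj
    have htri : eLpNorm (Ws j) q' μ ≤ C := by
      have heq : (fun ω => Ws j ω) = (fun ω => Ws j ω - W ω) + W := by
        funext ω; simp
      calc eLpNorm (Ws j) q' μ = eLpNorm ((fun ω => Ws j ω - W ω) + W) q' μ := by rw [← heq]
        _ ≤ eLpNorm (fun ω => Ws j ω - W ω) q' μ + eLpNorm W q' μ :=
            eLpNorm_add_le ((hWs j).sub hW) hW hq'1
        _ ≤ 1 + eLpNorm W q' μ := add_le_add_left hDj _
        _ = C := by rw [hCdef, add_comm]
    rcases eq_or_lt_of_le hq with hq1 | hq1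
    · -- q = 1
      have hqe : q = 1 := hq1.symm
      subst hqe
      have h1 : eLpNorm (fun ω => ‖Ws j ω‖ ^ (1:ℝ) - ‖W ω‖ ^ (1:ℝ)) 1 μ
          ≤ eLpNorm (fun ω => Ws j ω - W ω) 1 μ := by
        refine eLpNorm_mono fun ω => ?_
        simp only [Real.rpow_one, Real.norm_eq_abs]
        exact abs_norm_sub_norm_le _ _
      have h2 : eLpNorm (fun ω => Ws j ω - W ω) 1 μ = D j := by
        rw [hDdef, hq'def, ENNReal.ofReal_one]
      calc eLpNorm (fun ω => ‖Ws j ω‖ ^ (1:ℝ) - ‖W ω‖ ^ (1:ℝ)) 1 μ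
          ≤ D j := h1.trans h2.le
        _ = 1 * D j := (one_mul _).symm
        _ ≤ M * D j := mul_le_mul_left hM1 _
    · -- 1 < q
      set p' := q / (q - 1) with hp'def
      have hq1' : (0:ℝ) < q - 1 := by linarith
      have hpq : p'.HolderConjugate q := by
        rw [Real.holderConjugate_iff]
        constructor
        · rw [hp'def, lt_div_iff₀ hq1']
          linarith
        · rw [hp'def]
          field_simp
          ring
      have hinvp' : 1 / p' = (q - 1) / q := by
        rw [hp'def]; field_simp
      have hexp : (q - 1) * p' = q := by
        rw [hp'def]; field_simp
      set A := fun ω => ((‖Ws j ω‖₊ : ℝ≥0∞)) ^ (q - 1) with hAdef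
      set B := fun ω => ((‖W ω‖₊ : ℝ≥0∞)) ^ (q - 1) with hBdef
      set Df := fun ω => ((‖Ws j ω - W ω‖₊ : ℝ≥0∞)) with hDfdef
      have hAm : AEMeasurable A μ := (hWs j).enorm.pow_const _
      have hBm : AEMeasurable B μ := hW.enorm.pow_const _
      have hDfm : AEMeasurable Df μ := ((hWs j).sub hW).enorm
      have hpt : ∀ ω, ((‖(‖Ws j ω‖ ^ q - ‖W ω‖ ^ q)‖₊ : ℝ≥0∞))
          ≤ ENNReal.ofReal q * ((A ω + B ω) * Df ω) := by
        intro ω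
        set a := ‖Ws j ω‖ with ha
        set b := ‖W ω‖ with hb
        have h1 : |a ^ q - b ^ q| ≤ q * (a ^ (q - 1) + b ^ (q - 1)) * |a - b| :=
          abs_rpow_sub_rpow_le hq (norm_nonneg _) (norm_nonneg _)
        have h2 : |a - b| ≤ ‖Ws j ω - W ω‖ := abs_norm_sub_norm_le _ _
        have h3 : |a ^ q - b ^ q| ≤ q * (a ^ (q - 1) + b ^ (q - 1)) * ‖Ws j ω - W ω‖ := by
          refine h1.trans (mul_le_mul_of_nonneg_left h2 ?_)
          have := Real.rpow_nonneg (norm_nonneg (Ws j ω)) (q - 1)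
          have := Real.rpow_nonneg (norm_nonneg (W ω)) (q - 1)
          positivity
        rw [← enorm_eq_nnnorm, Real.enorm_eq_ofReal_abs]
        refine le_trans (ENNReal.ofReal_le_ofReal h3) ?_
        rw [mul_assoc, ENNReal.ofReal_mul hq0.le, ENNReal.ofReal_mul (by positivity)]
        refine mul_le_mul_right (mul_le_mul' ?_ ?_) _
        · rw [ENNReal.ofReal_add (Real.rpow_nonneg (norm_nonneg _) _)
            (Real.rpow_nonneg (norm_nonneg _) _)]
          have e1 : ENNReal.ofReal (a ^ (q - 1)) = A ω := by
            rw [show A ω = ((‖Ws j ω‖₊ : ℝ≥0∞)) ^ (q - 1) from rfl, ← enorm_eq_nnnorm, ← ofReal_norm_eq_enorm,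
              ENNReal.ofReal_rpow_of_nonneg (norm_nonneg _) (by linarith : (0:ℝ) ≤ q - 1), ha]
          have e2 : ENNReal.ofReal (b ^ (q - 1)) = B ω := by
            rw [show B ω = ((‖W ω‖₊ : ℝ≥0∞)) ^ (q - 1) from rfl, ← enorm_eq_nnnorm, ← ofReal_norm_eq_enorm,
              ENNReal.ofReal_rpow_of_nonneg (norm_nonneg _) (by linarith : (0:ℝ) ≤ q - 1), hb]
          rw [e1, e2]
        · rw [show Df ω = ((‖Ws j ω - W ω‖₊ : ℝ≥0∞)) from rfl, ← enorm_eq_nnnorm, ← ofReal_norm_eq_enorm]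
      have holder1 : ∫⁻ ω, A ω * Df ω ∂μ ≤ max 1 (C ^ q) * D j := by
        have h := ENNReal.lintegral_mul_le_Lp_mul_Lq μ hpq hAm hDfm
        have hA' : (∫⁻ ω, A ω ^ p' ∂μ) ^ (1 / p') ≤ max 1 (C ^ q) := by
          have heq : ∀ ω, A ω ^ p' = ((‖Ws j ω‖₊ : ℝ≥0∞)) ^ q := by
            intro ω; rw [hAdef, ← ENNReal.rpow_mul, hexp]
          rw [lintegral_congr heq, lintegral_nnnorm_rpow_eq hq]
          have h1 : (eLpNorm (Ws j) q' μ) ^ q ≤ C ^ q := ENNReal.rpow_le_rpow htri hq0.le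
          refine le_trans (ENNReal.rpow_le_rpow h1 (by positivity)) ?_
          refine rpow_le_max_one (by positivity) ?_
          rw [hinvp', div_le_one hq0]
          linarith
        have hD' : (∫⁻ ω, Df ω ^ q ∂μ) ^ (1 / q) = D j := by
          rw [hDfdef]
          rw [show (∫⁻ ω, ((‖Ws j ω - W ω‖₊ : ℝ≥0∞)) ^ q ∂μ)
            = (eLpNorm (fun ω => Ws j ω - W ω) q' μ) ^ q from lintegral_nnnorm_rpow_eq hq _,
            ← ENNReal.rpow_mul]
          rw [mul_one_div_cancel hq0.ne', ENNReal.rpow_one]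
        calc ∫⁻ ω, A ω * Df ω ∂μ ≤ (∫⁻ ω, A ω ^ p' ∂μ) ^ (1 / p') * (∫⁻ ω, Df ω ^ q ∂μ) ^ (1 / q) := h
          _ ≤ max 1 (C ^ q) * D j := by rw [hD']; exact mul_le_mul_left hA' _
      have holder2 : ∫⁻ ω, B ω * Df ω ∂μ ≤ max 1 (C ^ q) * D j := by
        have h := ENNReal.lintegral_mul_le_Lp_mul_Lq μ hpq hBm hDfm
        have hB' : (∫⁻ ω, B ω ^ p' ∂μ) ^ (1 / p') ≤ max 1 (C ^ q) := by
          have heq : ∀ ω, B ω ^ p' = ((‖W ω‖₊ : ℝ≥0∞)) ^ q := by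
            intro ω; rw [hBdef, ← ENNReal.rpow_mul, hexp]
          rw [lintegral_congr heq, lintegral_nnnorm_rpow_eq hq]
          have htriW : eLpNorm W q' μ ≤ C := le_self_add
          have h1 : (eLpNorm W q' μ) ^ q ≤ C ^ q := ENNReal.rpow_le_rpow htriW hq0.le
          refine le_trans (ENNReal.rpow_le_rpow h1 (by positivity)) ?_
          refine rpow_le_max_one (by positivity) ?_
          rw [hinvp', div_le_one hq0]
          linarith
        have hD' : (∫⁻ ω, Df ω ^ q ∂μ) ^ (1 / q) = D j := by
          rw [hDfdef]
          rw [show (∫⁻ ω, ((‖Ws j ω - W ω‖₊ : ℝ≥0∞)) ^ q ∂μ)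
            = (eLpNorm (fun ω => Ws j ω - W ω) q' μ) ^ q from lintegral_nnnorm_rpow_eq hq _,
            ← ENNReal.rpow_mul]
          rw [mul_one_div_cancel hq0.ne', ENNReal.rpow_one]
        calc ∫⁻ ω, B ω * Df ω ∂μ ≤ (∫⁻ ω, B ω ^ p' ∂μ) ^ (1 / p') * (∫⁻ ω, Df ω ^ q ∂μ) ^ (1 / q) := h
          _ ≤ max 1 (C ^ q) * D j := by rw [hD']; exact mul_le_mul_left hB' _
      calc eLpNorm (fun ω => ‖Ws j ω‖ ^ q - ‖W ω‖ ^ q) 1 μ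
          = ∫⁻ ω, ((‖(‖Ws j ω‖ ^ q - ‖W ω‖ ^ q)‖₊ : ℝ≥0∞)) ∂μ := eLpNorm_one_eq_lintegral_enorm
        _ ≤ ∫⁻ ω, ENNReal.ofReal q * ((A ω + B ω) * Df ω) ∂μ := lintegral_mono hpt
        _ = ENNReal.ofReal q * ∫⁻ ω, (A ω + B ω) * Df ω ∂μ :=
            lintegral_const_mul' _ _ ENNReal.ofReal_ne_top
        _ = ENNReal.ofReal q * ∫⁻ ω, (A ω * Df ω + B ω * Df ω) ∂μ := by
            congr 1; exact lintegral_congr fun ω => by ring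
        _ = ENNReal.ofReal q * ((∫⁻ ω, A ω * Df ω ∂μ) + ∫⁻ ω, B ω * Df ω ∂μ) := by
            congr 1; exact lintegral_add_left' (hAm.mul hDfm) _
        _ ≤ ENNReal.ofReal q * (max 1 (C ^ q) * D j + max 1 (C ^ q) * D j) := by
            exact mul_le_mul_right (add_le_add holder1 holder2) _
        _ = M * D j := by rw [hMdef]; ring
  -- squeeze
  have hMD : Tendsto (fun j => M * D j) atTop (𝓝 0) := by
    have := ENNReal.Tendsto.const_mul (a := M) hconv (Or.inr hM)
    rwa [mul_zero] at this
  exact tendsto_of_tendsto_of_tendsto_of_le_of_le' tendsto_const_nhds hMD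
    (Filter.Eventually.of_forall fun j => zero_le) hbnd



variable {Ω : Type*} {m0 : MeasurableSpace Ω} {μ : Measure Ω} [IsProbabilityMeasure μ]
  (ℱ : MeasureTheory.Filtration ℝ m0) {E : Type*} [NormedAddCommGroup E]

lemma condLqrs_le_iff {q : ℝ} (hq : 1 ≤ q) {r : ℝ≥0∞} {s : ℝ} {Z : Ω → E} {ε : ℝ≥0∞} :
    condLqrs μ ℱ q r s Z ≤ ε ↔
      eLpNorm (μ[(fun ω => ‖Z ω‖ ^ q)|ℱ s]) r μ ≤ ε ^ q := by
  have hq0 : (0:ℝ) < q := lt_of_lt_of_le zero_lt_one hq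
  unfold condLqrs
  constructor
  · intro h
    have h2 := ENNReal.rpow_le_rpow h hq0.le
    rwa [← ENNReal.rpow_mul, one_div, inv_mul_cancel₀ hq0.ne', ENNReal.rpow_one] at h2
  · intro h
    have h2 := ENNReal.rpow_le_rpow h (by positivity : (0:ℝ) ≤ 1/q)
    rwa [← ENNReal.rpow_mul, mul_one_div_cancel hq0.ne', ENNReal.rpow_one] at h2

/-- Fatou-type stability of `condLqrs` bounds under `L^q` convergence. -/
lemma condLqrs_fatou {q : ℝ} (hq : 1 ≤ q) {r : ℝ≥0∞} {s : ℝ}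
    {Ws : ℕ → Ω → E} {W : Ω → E}
    (hWs : ∀ j, AEStronglyMeasurable (Ws j) μ) (hW : AEStronglyMeasurable W μ)
    (hWsint : ∀ j, Integrable (fun ω => ‖Ws j ω‖ ^ q) μ)
    (hWint : Integrable (fun ω => ‖W ω‖ ^ q) μ)
    (hconv : Tendsto (fun j => eLpNorm (fun ω => Ws j ω - W ω) (ENNReal.ofReal q) μ)
      atTop (𝓝 0))
    {ε : ℝ≥0∞} (hbd : ∀ j, condLqrs μ ℱ q r s (Ws j) ≤ ε) :
    condLqrs μ ℱ q r s W ≤ ε := by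
  have hq0 : (0:ℝ) < q := lt_of_lt_of_le zero_lt_one hq
  have hWfin : eLpNorm W (ENNReal.ofReal q) μ ≠ ∞ :=
    (memLp_of_integrable_rpow hq hW hWint).2.ne
  have step1 := tendsto_eLpNorm_one_norm_rpow hq hWs hW hWfin hconv
  have step2 : Tendsto (fun j => eLpNorm
      ((μ[fun ω => ‖Ws j ω‖ ^ q|ℱ s]) - μ[fun ω => ‖W ω‖ ^ q|ℱ s]) 1 μ) atTop (𝓝 0) := by
    have hb : ∀ j, eLpNorm ((μ[fun ω => ‖Ws j ω‖ ^ q|ℱ s]) - μ[fun ω => ‖W ω‖ ^ q|ℱ s]) 1 μ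
        ≤ eLpNorm (fun ω => ‖Ws j ω‖ ^ q - ‖W ω‖ ^ q) 1 μ := by
      intro j
      have hsub : (μ[fun ω => ‖Ws j ω‖ ^ q|ℱ s]) - μ[fun ω => ‖W ω‖ ^ q|ℱ s]
          =ᵐ[μ] μ[(fun ω => ‖Ws j ω‖ ^ q) - fun ω => ‖W ω‖ ^ q|ℱ s] :=
        (condExp_sub (hWsint j) hWint _).symm
      rw [eLpNorm_congr_ae hsub]
      exact eLpNorm_one_condExp_le_eLpNorm _
    exact tendsto_of_tendsto_of_tendsto_of_le_of_le' tendsto_const_nhds step1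
      (Filter.Eventually.of_forall fun j => zero_le) (Filter.Eventually.of_forall hb)
  have hmeas1 : ∀ j : ℕ, AEStronglyMeasurable (μ[fun ω => ‖Ws j ω‖ ^ q|ℱ s]) μ := fun j =>
    (stronglyMeasurable_condExp.mono (ℱ.le s)).aestronglyMeasurable
  have hmeas0 : AEStronglyMeasurable (μ[fun ω => ‖W ω‖ ^ q|ℱ s]) μ :=
    (stronglyMeasurable_condExp.mono (ℱ.le s)).aestronglyMeasurable
  have step3 : TendstoInMeasure μ (fun j => μ[fun ω => ‖Ws j ω‖ ^ q|ℱ s]) atTop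
      (μ[fun ω => ‖W ω‖ ^ q|ℱ s]) :=
    tendstoInMeasure_of_tendsto_eLpNorm one_ne_zero hmeas1 hmeas0 step2
  obtain ⟨ns, hns, hae⟩ := step3.exists_seq_tendsto_ae
  have step5 := Lp.eLpNorm_lim_le_liminf_eLpNorm (μ := μ) (p := r)
    (f := fun i => μ[fun ω => ‖Ws (ns i) ω‖ ^ q|ℱ s]) (fun i => hmeas1 (ns i))
    (μ[fun ω => ‖W ω‖ ^ q|ℱ s]) hae
  have step6 : Filter.liminf (fun i => eLpNorm (μ[fun ω => ‖Ws (ns i) ω‖ ^ q|ℱ s]) r μ) atTop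
      ≤ ε ^ q := by
    refine le_trans (Filter.liminf_le_liminf (Filter.Eventually.of_forall fun i =>
      (condLqrs_le_iff ℱ hq).mp (hbd (ns i)))) ?_
    rw [Filter.liminf_const]
  exact (condLqrs_le_iff ℱ hq).mpr (step5.trans step6)

lemma add_rpow_le_two_rpow {x y q : ℝ} (hx : 0 ≤ x) (hy : 0 ≤ y) (hq : 0 ≤ q) :
    (x + y) ^ q ≤ 2 ^ q * (x ^ q + y ^ q) := by
  have hmx := le_max_left x y
  have hmy := le_max_right x y
  have hm0 : 0 ≤ max x y := le_trans hx hmx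
  calc (x + y) ^ q ≤ (2 * max x y) ^ q := Real.rpow_le_rpow (by linarith) (by linarith) hq
    _ = 2 ^ q * (max x y) ^ q := Real.mul_rpow (by norm_num) hm0
    _ ≤ 2 ^ q * (x ^ q + y ^ q) := by
        refine mul_le_mul_of_nonneg_left ?_ (Real.rpow_nonneg (by norm_num) _)
        rcases max_cases x y with ⟨hm, _⟩ | ⟨hm, _⟩ <;> rw [hm]
        · exact le_add_of_nonneg_right (Real.rpow_nonneg hy _)
        · exact le_add_of_nonneg_left (Real.rpow_nonneg hx _)

/-- Finiteness of `condLqrs` of a sum. -/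
lemma condLqrs_add_lt_top {q : ℝ} (hq : 1 ≤ q) {r : ℝ≥0∞} (hr : 1 ≤ r) {s : ℝ} {A B : Ω → E}
    (hA : AEStronglyMeasurable A μ) (hB : AEStronglyMeasurable B μ)
    (hAi : Integrable (fun ω => ‖A ω‖ ^ q) μ) (hBi : Integrable (fun ω => ‖B ω‖ ^ q) μ)
    (hAfin : condLqrs μ ℱ q r s A ≠ ∞) (hBfin : condLqrs μ ℱ q r s B ≠ ∞) :
    condLqrs μ ℱ q r s (fun ω => A ω + B ω) < ∞ := by
  have hq0 : (0:ℝ) < q := lt_of_lt_of_le zero_lt_one hq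
  have hXA : eLpNorm (μ[(fun ω => ‖A ω‖ ^ q)|ℱ s]) r μ ≠ ∞ := by
    intro hcon
    apply hAfin
    unfold condLqrs
    rw [hcon, ENNReal.top_rpow_of_pos (by positivity)]
  have hXB : eLpNorm (μ[(fun ω => ‖B ω‖ ^ q)|ℱ s]) r μ ≠ ∞ := by
    intro hcon
    apply hBfin
    unfold condLqrs
    rw [hcon, ENNReal.top_rpow_of_pos (by positivity)]
  have hptw : ∀ ω, ‖A ω + B ω‖ ^ q ≤ 2 ^ q * (‖A ω‖ ^ q + ‖B ω‖ ^ q) := fun ω =>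
    le_trans (Real.rpow_le_rpow (norm_nonneg _) (norm_add_le _ _) hq0.le)
      (add_rpow_le_two_rpow (norm_nonneg _) (norm_nonneg _) hq0.le)
  have hrhsint : Integrable (fun ω => 2 ^ q * (‖A ω‖ ^ q + ‖B ω‖ ^ q)) μ :=
    (hAi.add hBi).const_mul _
  have hint : Integrable (fun ω => ‖A ω + B ω‖ ^ q) μ := by
    refine Integrable.mono' hrhsint (aesm_norm_rpow hq (hA.add hB)) ?_
    refine Filter.Eventually.of_forall fun ω => ?_
    rw [Real.norm_eq_abs, abs_of_nonneg (Real.rpow_nonneg (norm_nonneg _) _)]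
    exact hptw ω
  have hmono := condExp_mono (m := ℱ s) hint hrhsint (Filter.Eventually.of_forall hptw)
  have h0 : (fun ω => 2 ^ q * (‖A ω‖ ^ q + ‖B ω‖ ^ q))
      = ((2:ℝ) ^ q) • ((fun ω => ‖A ω‖ ^ q) + fun ω => ‖B ω‖ ^ q) := by
    funext ω; simp [smul_eq_mul]
  have hrhs : μ[fun ω => 2 ^ q * (‖A ω‖ ^ q + ‖B ω‖ ^ q)|ℱ s]
      =ᵐ[μ] fun ω => 2 ^ q * ((μ[fun ω' => ‖A ω'‖ ^ q|ℱ s]) ω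
        + (μ[fun ω' => ‖B ω'‖ ^ q|ℱ s]) ω) := by
    rw [h0]
    have hsmul := condExp_smul (μ := μ) (m := ℱ s) ((2:ℝ) ^ q)
      ((fun ω => ‖A ω‖ ^ q) + fun ω => ‖B ω‖ ^ q)
    have hadd := condExp_add (μ := μ) (m := ℱ s) hAi hBi
    filter_upwards [hsmul, hadd] with ω h1 h2
    rw [h1]
    simp only [Pi.smul_apply, smul_eq_mul]
    rw [h2]
    simp only [Pi.add_apply]
  have hnn1 : 0 ≤ᵐ[μ] μ[fun ω => ‖A ω + B ω‖ ^ q|ℱ s] :=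
    condExp_nonneg (Filter.Eventually.of_forall fun ω => Real.rpow_nonneg (norm_nonneg _) _)
  have hnn2 : 0 ≤ᵐ[μ] μ[fun ω' => ‖A ω'‖ ^ q|ℱ s] :=
    condExp_nonneg (Filter.Eventually.of_forall fun ω => Real.rpow_nonneg (norm_nonneg _) _)
  have hnn3 : 0 ≤ᵐ[μ] μ[fun ω' => ‖B ω'‖ ^ q|ℱ s] :=
    condExp_nonneg (Filter.Eventually.of_forall fun ω => Real.rpow_nonneg (norm_nonneg _) _)
  have hglenn : ∀ᵐ ω ∂μ, ‖(μ[fun ω' => ‖A ω' + B ω'‖ ^ q|ℱ s]) ω‖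
      ≤ ‖(((2:ℝ) ^ q) • ((μ[fun ω' => ‖A ω'‖ ^ q|ℱ s]) + μ[fun ω' => ‖B ω'‖ ^ q|ℱ s])) ω‖ := by
    filter_upwards [hmono, hrhs, hnn1, hnn2, hnn3] with ω h1 h2 h3 h4 h5
    simp only [Pi.zero_apply] at h3 h4 h5
    rw [h2] at h1
    simp only [Pi.smul_apply, Pi.add_apply, smul_eq_mul, Real.norm_eq_abs]
    have h2q : (0:ℝ) ≤ 2 ^ q := Real.rpow_nonneg (by norm_num) _
    rw [abs_of_nonneg h3, abs_of_nonneg (by positivity)]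
    exact h1
  unfold condLqrs
  refine ENNReal.rpow_lt_top_of_nonneg (by positivity) ?_
  refine ne_of_lt (lt_of_le_of_lt (eLpNorm_mono_ae hglenn) ?_)
  rw [eLpNorm_const_smul]
  refine ENNReal.mul_lt_top (by simp) ?_
  refine lt_of_le_of_lt (eLpNorm_add_le
    (stronglyMeasurable_condExp.mono (ℱ.le s)).aestronglyMeasurable
    (stronglyMeasurable_condExp.mono (ℱ.le s)).aestronglyMeasurable hr) ?_
  exact ENNReal.add_lt_top.mpr ⟨hXA.lt_top, hXB.lt_top⟩



variable {Ω : Type*} {m0 : MeasurableSpace Ω} (μ : Measure Ω) [IsProbabilityMeasure μ]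
  (ℱ : MeasureTheory.Filtration ℝ m0) {E : Type*} [NormedAddCommGroup E]
  {p q : ℝ} {r : ℝ≥0∞} {Y : ℝ → Ω → E} {T : ℝ}

lemma phi_single_bound (hp : 1 ≤ p) (hq : 1 ≤ q) {a b : ℝ} (ha : 0 ≤ a) (hab : a < b) :
    (condLqrs μ ℱ q r a (fun ω => Y b ω - Y a ω)) ^ p ≤ phi μ ℱ p q r Y b := by
  rcases eq_or_lt_of_le ha with h0 | h0
  · have ha0 : a = 0 := h0.symm
    subst ha0
    refine le_trans ?_ (le_iSup (fun P : IntervalPartition 0 b => ∑ i ∈ Finset.range P.n,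
      (condLqrs μ ℱ q r (P.pt i) (fun ω => Y (P.pt (i + 1)) ω - Y (P.pt i) ω)) ^ p)
      (onePart 0 b hab))
    show _ ≤ ∑ i ∈ Finset.range 1, _
    rw [Finset.sum_range_one]
    simp only [onePart]
    norm_num
  · exact le_trans le_add_self (phi_superadd μ ℱ (Y := Y) (r := r) hp hq h0 hab.le)

lemma condLqrs_increment_le (hp : 1 ≤ p) (hq : 1 ≤ q) (hT : 0 < T)
    {a b : ℝ} (ha : 0 ≤ a) (hab : a < b) (hbT : b ≤ T) :
    condLqrs μ ℱ q r a (fun ω => Y b ω - Y a ω)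
      ≤ ((pqrVar μ ℱ p q r Y 0 T) ^ p) ^ (1/p) := by
  have hp0 : (0:ℝ) < p := lt_of_lt_of_le zero_lt_one hp
  have h1 := (phi_single_bound μ ℱ (r := r) hp hq ha hab).trans
    (phi_le μ ℱ (Y := Y) (r := r) hp hq hT (lt_of_le_of_lt ha hab) hbT)
  have h2 := ENNReal.rpow_le_rpow h1 (by positivity : (0:ℝ) ≤ 1/p)
  rwa [← ENNReal.rpow_mul, mul_one_div_cancel hp0.ne', ENNReal.rpow_one] at h2

variable [CompleteSpace E]

/-- Existence of the right limit in `L^{q,r}_s`. -/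
lemma exists_right_limit (hp : 1 ≤ p) (hq : 1 ≤ q) (hr : 1 ≤ r) (hT : 0 < T)
    (hmeas : ∀ t ∈ Set.Icc (0:ℝ) T, AEStronglyMeasurable (Y t) μ)
    (hint : ∀ ⦃u v : ℝ⦄, 0 ≤ u → u ≤ v → v ≤ T →
      Integrable (fun ω => ‖Y v ω - Y u ω‖ ^ q) μ)
    (hfin : pqrVar μ ℱ p q r Y 0 T ≠ ∞)
    {s t : ℝ} (hs : 0 ≤ s) (hst : s ≤ t) (htT : t < T) :
    ∃ L : Ω → E, MemLqrs μ ℱ q r s L ∧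
      Filter.Tendsto
        (fun u => condLqrs μ ℱ q r s (fun ω => (Y u ω - Y s ω) - L ω))
        (nhdsWithin t (Set.Ioc t T)) (nhds 0) := by
  have hp0 : (0:ℝ) < p := lt_of_lt_of_le zero_lt_one hp
  have hq0 : (0:ℝ) < q := lt_of_lt_of_le zero_lt_one hq
  have ht0 : 0 ≤ t := hs.trans hst
  have hq'1 : (1:ℝ≥0∞) ≤ ENNReal.ofReal q := by
    rw [← ENNReal.ofReal_one]; exact ENNReal.ofReal_le_ofReal hq
  set q' := ENNReal.ofReal q with hq'def
  -- geometric bounds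
  have hhalf0 : (2⁻¹ : ℝ≥0∞) ≠ 0 := ENNReal.inv_ne_zero.mpr ENNReal.ofNat_ne_top
  have hhalft : (2⁻¹ : ℝ≥0∞) ≠ ∞ := ENNReal.inv_ne_top.mpr two_ne_zero
  have hhalf1 : (2⁻¹ : ℝ≥0∞) < 1 := ENNReal.inv_lt_one.mpr one_lt_two
  have hεpos : ∀ N : ℕ, (0:ℝ≥0∞) < 2⁻¹ ^ (N + 1) :=
    fun N => ENNReal.pow_pos (pos_iff_ne_zero.mpr hhalf0) _
  have hεlt : ∀ N : ℕ, (2⁻¹ : ℝ≥0∞) ^ (N + 1) < 2⁻¹ ^ N := by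
    intro N
    rw [pow_succ]
    calc (2⁻¹:ℝ≥0∞) ^ N * 2⁻¹ < 2⁻¹ ^ N * 1 := by
          exact ENNReal.mul_lt_mul_right (pow_ne_zero N hhalf0) (ENNReal.pow_ne_top hhalft) hhalf1
      _ = 2⁻¹ ^ N := mul_one _
  -- thresholds
  have hW : ∀ N : ℕ, ∃ w, t < w ∧ w ≤ T ∧ ∀ u v, t < u → u ≤ v → v ≤ w →
      condLqrs μ ℱ q r u (fun ω => Y v ω - Y u ω) ≤ 2⁻¹ ^ (N + 1) :=
    fun N => cauchy_right μ ℱ hp hq hT ht0 htT hfin (hεpos N)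
  choose w hw1 hw2 hw3 using hW
  -- the approximating sequence
  set v : ℕ → ℝ := fun N =>
    min ((Finset.range (N + 1)).inf' ⟨N, Finset.self_mem_range_succ N⟩ w)
      (t + (T - t) * (1 / (N + 1))) with hvdef
  have hvgt : ∀ N, t < v N := by
    intro N
    rw [hvdef, lt_min_iff]
    constructor
    · refine (Finset.lt_inf'_iff _).mpr ?_
      intro k _
      exact hw1 k
    · have h1 : (0:ℝ) < (T - t) * (1 / (N + 1)) := mul_pos (by linarith) (by positivity)
      linarith
  have hvlew : ∀ N n : ℕ, N ≤ n → v n ≤ w N := by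
    intro N n hNn
    refine le_trans (min_le_left _ _) ?_
    exact Finset.inf'_le _ (Finset.mem_range.mpr (by omega))
  have hvleT : ∀ N, v N ≤ T := by
    intro N
    refine le_trans (min_le_right _ _) ?_
    have h1 : (T - t) * (1 / ((N:ℝ) + 1)) ≤ (T - t) * 1 := by
      refine mul_le_mul_of_nonneg_left ?_ (by linarith)
      rw [div_le_one (by positivity)]
      have : (0:ℝ) ≤ (N:ℝ) := Nat.cast_nonneg N
      linarith
    linarith
  have hvtend : Filter.Tendsto v atTop (𝓝 t) := by
    have hup : Filter.Tendsto (fun N : ℕ => t + (T - t) * (1 / (N + 1))) atTop (𝓝 t) := by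
      have h1 : Filter.Tendsto (fun N : ℕ => (T - t) * (1 / ((N:ℝ) + 1))) atTop (𝓝 0) := by
        have := tendsto_one_div_add_atTop_nhds_zero_nat.const_mul (T - t)
        simpa using this
      have := h1.const_add t
      simpa using this
    refine tendsto_of_tendsto_of_tendsto_of_le_of_le tendsto_const_nhds hup
      (fun N => (hvgt N).le) (fun N => min_le_right _ _)
  -- the Cauchy sequence
  set f : ℕ → Ω → E := fun N => fun ω => Y (v N) ω - Y s ω with hfdef
  have hsv : ∀ N, s ≤ v N := fun N => hst.trans (hvgt N).le
  have hv0 : ∀ N, 0 ≤ v N := fun N => hs.trans (hsv N)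
  have hfmem : ∀ N, MemLp (f N) q' μ := by
    intro N
    exact memLp_of_integrable_rpow hq
      (((hmeas (v N) ⟨hv0 N, hvleT N⟩)).sub (hmeas s ⟨hs, hst.trans htT.le⟩))
      (hint hs (hsv N) (hvleT N))
  have hcau : ∀ N n m : ℕ, N ≤ n → N ≤ m → eLpNorm (f n - f m) q' μ < 2⁻¹ ^ N := by
    intro N n m hn hm
    have heq : f n - f m = fun ω => Y (v n) ω - Y (v m) ω := by
      funext ω
      show (Y (v n) ω - Y s ω) - (Y (v m) ω - Y s ω) = _
      abel
    rw [heq]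
    refine lt_of_le_of_lt ?_ (hεlt N)
    rcases le_total (v n) (v m) with hnm | hnm
    · rw [show (fun ω => Y (v n) ω - Y (v m) ω) = -(fun ω => Y (v m) ω - Y (v n) ω) from
        funext fun ω => (neg_sub _ _).symm, eLpNorm_neg]
      refine le_trans (eLpNorm_le_condLqrs ℱ hq hr (hint (hv0 n) hnm (hvleT m))
        (((hmeas (v m) ⟨hv0 m, hvleT m⟩)).sub (hmeas (v n) ⟨hv0 n, hvleT n⟩)) (v n)) ?_
      exact hw3 N (v n) (v m) (hvgt n) hnm (hvlew N m hm)
    · refine le_trans (eLpNorm_le_condLqrs ℱ hq hr (hint (hv0 m) hnm (hvleT n))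
        (((hmeas (v n) ⟨hv0 n, hvleT n⟩)).sub (hmeas (v m) ⟨hv0 m, hvleT m⟩)) (v m)) ?_
      exact hw3 N (v m) (v n) (hvgt m) hnm (hvlew N n hn)
  have hBsum : (∑' N : ℕ, (2⁻¹ : ℝ≥0∞) ^ N) ≠ ∞ := by
    rw [ENNReal.tsum_geometric, ENNReal.one_sub_inv_two, inv_inv]
    exact ENNReal.ofNat_ne_top
  obtain ⟨L, hLmem, hLtend⟩ := MeasureTheory.Lp.cauchy_complete_eLpNorm hq'1 hfmem hBsum hcau
  have hL1 : AEStronglyMeasurable L μ := hLmem.1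
  have hL2 : Integrable (fun ω => ‖L ω‖ ^ q) μ := integrable_rpow_of_memLp hq hLmem
  -- a finite uniform bound for the L^{q,r}_s norms of the f N
  set C0 := ((pqrVar μ ℱ p q r Y 0 T) ^ p) ^ (1/p) with hC0def
  have hC0 : C0 ≠ ∞ :=
    ENNReal.rpow_ne_top_of_nonneg (by positivity)
      (ENNReal.rpow_ne_top_of_nonneg hp0.le hfin)
  have hfbd : ∀ N, condLqrs μ ℱ q r s (f N) ≤ C0 := by
    intro N
    exact condLqrs_increment_le μ ℱ hp hq hT hs (lt_of_le_of_lt hst (hvgt N)) (hvleT N)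
  have hfaesm : ∀ N, AEStronglyMeasurable (f N) μ := fun N => (hfmem N).1
  have hfint : ∀ N, Integrable (fun ω => ‖f N ω‖ ^ q) μ := fun N => hint hs (hsv N) (hvleT N)
  have hconvL : Filter.Tendsto (fun N => eLpNorm (fun ω => f N ω - L ω) q' μ) atTop (𝓝 0) := by
    refine hLtend.congr fun N => ?_
    rfl
  have hL3 : condLqrs μ ℱ q r s L ≤ C0 :=
    condLqrs_fatou ℱ hq hfaesm hL1 hfint hL2 hconvL hfbd
  refine ⟨L, ⟨hL1, hL2, lt_of_le_of_lt hL3 hC0.lt_top⟩, ?_⟩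
  -- the convergence
  rw [ENNReal.tendsto_nhds_zero]
  intro ε hε
  obtain ⟨w', hw'1, hw'2, hw'3⟩ := cauchy_right μ ℱ hp hq hT ht0 htT hfin hε
  have hev : ∀ᶠ u in nhdsWithin t (Set.Ioc t T), u ∈ Set.Ioc t T ∧ u < w' := by
    refine (eventually_mem_nhdsWithin).and ?_
    exact eventually_nhdsWithin_of_eventually_nhds (Iio_mem_nhds hw'1)
  filter_upwards [hev] with u hu
  obtain ⟨⟨htu, huT⟩, huw⟩ := hu
  -- find K with v k ≤ u for k ≥ K
  have hevv : ∀ᶠ k in atTop, v k < u := hvtend.eventually_lt_const htu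
  obtain ⟨K, hK⟩ := Filter.eventually_atTop.mp hevv
  have hu0 : 0 ≤ u := ht0.trans htu.le
  have heq : ∀ j : ℕ, (fun ω => (Y u ω - Y (v (j + K)) ω) - ((Y u ω - Y s ω) - L ω))
      = -(f (j + K) - L) := by
    intro j; funext ω
    show _ = -((Y (v (j + K)) ω - Y s ω) - L ω)
    abel
  refine condLqrs_fatou ℱ hq (Ws := fun j => fun ω => Y u ω - Y (v (j + K)) ω)
    (W := fun ω => (Y u ω - Y s ω) - L ω)
    (fun j => (hmeas u ⟨hu0, huT⟩).sub (hmeas (v (j + K)) ⟨hv0 _, hvleT _⟩))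
    (((hmeas u ⟨hu0, huT⟩).sub (hmeas s ⟨hs, hst.trans htT.le⟩)).sub hL1)
    (fun j => hint (hv0 (j + K)) (hK (j + K) (Nat.le_add_left K j)).le huT)
    (integrable_rpow_of_memLp hq ((memLp_of_integrable_rpow hq
      ((hmeas u ⟨hu0, huT⟩).sub (hmeas s ⟨hs, hst.trans htT.le⟩))
      (hint hs (hst.trans htu.le) huT)).sub hLmem))
    ?_ ?_
  · have h1 : Filter.Tendsto (fun j => eLpNorm (f (j + K) - L) q' μ) atTop (𝓝 0) :=
      hLtend.comp (tendsto_add_atTop_nat K)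
    refine h1.congr fun j => ?_
    rw [heq j, eLpNorm_neg]
  · intro j
    have h1 : t < v (j + K) := hvgt _
    have h2 : v (j + K) ≤ u := (hK (j + K) (Nat.le_add_left K j)).le
    have h3 := hw'3 (v (j + K)) u h1 h2 huw.le
    exact le_trans (condLqrs_mono_base ℱ hq hr (hst.trans h1.le) _) h3

/-- Existence of the left limit in `L^{q,r}_s`. -/
lemma exists_left_limit (hp : 1 ≤ p) (hq : 1 ≤ q) (hr : 1 ≤ r) (hT : 0 < T)
    (hmeas : ∀ t ∈ Set.Icc (0:ℝ) T, AEStronglyMeasurable (Y t) μ)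
    (hint : ∀ ⦃u v : ℝ⦄, 0 ≤ u → u ≤ v → v ≤ T →
      Integrable (fun ω => ‖Y v ω - Y u ω‖ ^ q) μ)
    (hfin : pqrVar μ ℱ p q r Y 0 T ≠ ∞)
    {s t : ℝ} (hs : 0 ≤ s) (hst : s < t) (htT : t ≤ T) :
    ∃ L : Ω → E, MemLqrs μ ℱ q r s L ∧
      Filter.Tendsto
        (fun u => condLqrs μ ℱ q r s (fun ω => (Y u ω - Y s ω) - L ω))
        (nhdsWithin t (Set.Ico s t)) (nhds 0) := by
  have hp0 : (0:ℝ) < p := lt_of_lt_of_le zero_lt_one hp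
  have hq0 : (0:ℝ) < q := lt_of_lt_of_le zero_lt_one hq
  have hq'1 : (1:ℝ≥0∞) ≤ ENNReal.ofReal q := by
    rw [← ENNReal.ofReal_one]; exact ENNReal.ofReal_le_ofReal hq
  set q' := ENNReal.ofReal q with hq'def
  have hhalf0 : (2⁻¹ : ℝ≥0∞) ≠ 0 := ENNReal.inv_ne_zero.mpr ENNReal.ofNat_ne_top
  have hhalft : (2⁻¹ : ℝ≥0∞) ≠ ∞ := ENNReal.inv_ne_top.mpr two_ne_zero
  have hhalf1 : (2⁻¹ : ℝ≥0∞) < 1 := ENNReal.inv_lt_one.mpr one_lt_two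
  have hεpos : ∀ N : ℕ, (0:ℝ≥0∞) < 2⁻¹ ^ (N + 1) :=
    fun N => ENNReal.pow_pos (pos_iff_ne_zero.mpr hhalf0) _
  have hεlt : ∀ N : ℕ, (2⁻¹ : ℝ≥0∞) ^ (N + 1) < 2⁻¹ ^ N := by
    intro N
    rw [pow_succ]
    calc (2⁻¹:ℝ≥0∞) ^ N * 2⁻¹ < 2⁻¹ ^ N * 1 := by
          exact ENNReal.mul_lt_mul_right (pow_ne_zero N hhalf0) (ENNReal.pow_ne_top hhalft) hhalf1
      _ = 2⁻¹ ^ N := mul_one _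
  have hW : ∀ N : ℕ, ∃ w, s < w ∧ w < t ∧ ∀ u v, w ≤ u → u ≤ v → v < t →
      condLqrs μ ℱ q r u (fun ω => Y v ω - Y u ω) ≤ 2⁻¹ ^ (N + 1) :=
    fun N => cauchy_left μ ℱ hp hq hT hs hst htT hfin (hεpos N)
  choose w hw1 hw2 hw3 using hW
  set v : ℕ → ℝ := fun N =>
    max ((Finset.range (N + 1)).sup' ⟨N, Finset.self_mem_range_succ N⟩ w)
      (t - (t - s) * (1 / (N + 1))) with hvdef
  have hvlt : ∀ N, v N < t := by
    intro N
    rw [hvdef, max_lt_iff]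
    constructor
    · refine (Finset.sup'_lt_iff _).mpr ?_
      intro k _
      exact hw2 k
    · have h1 : (0:ℝ) < (t - s) * (1 / (N + 1)) := mul_pos (by linarith) (by positivity)
      linarith
  have hvgew : ∀ N n : ℕ, N ≤ n → w N ≤ v n := by
    intro N n hNn
    refine le_trans ?_ (le_max_left _ _)
    exact Finset.le_sup' _ (Finset.mem_range.mpr (by omega))
  have hvgts : ∀ N, s < v N := fun N => lt_of_lt_of_le (hw1 N) (hvgew N N le_rfl)
  have hv0 : ∀ N, 0 ≤ v N := fun N => hs.trans (hvgts N).le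
  have hvleT : ∀ N, v N ≤ T := fun N => (hvlt N).le.trans htT
  have hvtend : Filter.Tendsto v atTop (𝓝 t) := by
    have hlow : Filter.Tendsto (fun N : ℕ => t - (t - s) * (1 / (N + 1))) atTop (𝓝 t) := by
      have h1 : Filter.Tendsto (fun N : ℕ => (t - s) * (1 / ((N:ℝ) + 1))) atTop (𝓝 0) := by
        have := tendsto_one_div_add_atTop_nhds_zero_nat.const_mul (t - s)
        simpa using this
      have := h1.const_sub t
      simpa using this
    refine tendsto_of_tendsto_of_tendsto_of_le_of_le hlow tendsto_const_nhds
      (fun N => le_max_right _ _) (fun N => (hvlt N).le)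
  set f : ℕ → Ω → E := fun N => fun ω => Y (v N) ω - Y s ω with hfdef
  have hsv : ∀ N, s ≤ v N := fun N => (hvgts N).le
  have hfmem : ∀ N, MemLp (f N) q' μ := by
    intro N
    exact memLp_of_integrable_rpow hq
      (((hmeas (v N) ⟨hv0 N, hvleT N⟩)).sub (hmeas s ⟨hs, hst.le.trans htT⟩))
      (hint hs (hsv N) (hvleT N))
  have hcau : ∀ N n m : ℕ, N ≤ n → N ≤ m → eLpNorm (f n - f m) q' μ < 2⁻¹ ^ N := by
    intro N n m hn hm
    have heq : f n - f m = fun ω => Y (v n) ω - Y (v m) ω := by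
      funext ω
      show (Y (v n) ω - Y s ω) - (Y (v m) ω - Y s ω) = _
      abel
    rw [heq]
    refine lt_of_le_of_lt ?_ (hεlt N)
    rcases le_total (v n) (v m) with hnm | hnm
    · rw [show (fun ω => Y (v n) ω - Y (v m) ω) = -(fun ω => Y (v m) ω - Y (v n) ω) from
        funext fun ω => (neg_sub _ _).symm, eLpNorm_neg]
      refine le_trans (eLpNorm_le_condLqrs ℱ hq hr (hint (hv0 n) hnm (hvleT m))
        (((hmeas (v m) ⟨hv0 m, hvleT m⟩)).sub (hmeas (v n) ⟨hv0 n, hvleT n⟩)) (v n)) ?_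
      exact hw3 N (v n) (v m) (hvgew N n hn) hnm (hvlt m)
    · refine le_trans (eLpNorm_le_condLqrs ℱ hq hr (hint (hv0 m) hnm (hvleT n))
        (((hmeas (v n) ⟨hv0 n, hvleT n⟩)).sub (hmeas (v m) ⟨hv0 m, hvleT m⟩)) (v m)) ?_
      exact hw3 N (v m) (v n) (hvgew N m hm) hnm (hvlt n)
  have hBsum : (∑' N : ℕ, (2⁻¹ : ℝ≥0∞) ^ N) ≠ ∞ := by
    rw [ENNReal.tsum_geometric, ENNReal.one_sub_inv_two, inv_inv]
    exact ENNReal.ofNat_ne_top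
  obtain ⟨L, hLmem, hLtend⟩ := MeasureTheory.Lp.cauchy_complete_eLpNorm hq'1 hfmem hBsum hcau
  have hL1 : AEStronglyMeasurable L μ := hLmem.1
  have hL2 : Integrable (fun ω => ‖L ω‖ ^ q) μ := integrable_rpow_of_memLp hq hLmem
  set C0 := ((pqrVar μ ℱ p q r Y 0 T) ^ p) ^ (1/p) with hC0def
  have hC0 : C0 ≠ ∞ :=
    ENNReal.rpow_ne_top_of_nonneg (by positivity)
      (ENNReal.rpow_ne_top_of_nonneg hp0.le hfin)
  have hfbd : ∀ N, condLqrs μ ℱ q r s (f N) ≤ C0 := by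
    intro N
    exact condLqrs_increment_le μ ℱ hp hq hT hs (hvgts N) (hvleT N)
  have hfaesm : ∀ N, AEStronglyMeasurable (f N) μ := fun N => (hfmem N).1
  have hfint : ∀ N, Integrable (fun ω => ‖f N ω‖ ^ q) μ := fun N => hint hs (hsv N) (hvleT N)
  have hconvL : Filter.Tendsto (fun N => eLpNorm (fun ω => f N ω - L ω) q' μ) atTop (𝓝 0) := by
    refine hLtend.congr fun N => ?_
    rfl
  have hL3 : condLqrs μ ℱ q r s L ≤ C0 :=
    condLqrs_fatou ℱ hq hfaesm hL1 hfint hL2 hconvL hfbd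
  refine ⟨L, ⟨hL1, hL2, lt_of_le_of_lt hL3 hC0.lt_top⟩, ?_⟩
  rw [ENNReal.tendsto_nhds_zero]
  intro ε hε
  obtain ⟨w', hw'1, hw'2, hw'3⟩ := cauchy_left μ ℱ hp hq hT hs hst htT hfin hε
  have hev : ∀ᶠ u in nhdsWithin t (Set.Ico s t), u ∈ Set.Ico s t ∧ w' < u := by
    refine (eventually_mem_nhdsWithin).and ?_
    exact eventually_nhdsWithin_of_eventually_nhds (Ioi_mem_nhds hw'2)
  filter_upwards [hev] with u hu
  obtain ⟨⟨hsu, hut⟩, huw⟩ := hu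
  have hu0 : 0 ≤ u := hs.trans hsu
  have huT : u ≤ T := hut.le.trans htT
  have hevv : ∀ᶠ k in atTop, w' < v k := hvtend.eventually_const_lt hw'2
  obtain ⟨K, hK⟩ := Filter.eventually_atTop.mp hevv
  have heq : ∀ j : ℕ, (fun ω => (Y u ω - Y (v (j + K)) ω) - ((Y u ω - Y s ω) - L ω))
      = -(f (j + K) - L) := by
    intro j; funext ω
    show _ = -((Y (v (j + K)) ω - Y s ω) - L ω)
    abel
  refine condLqrs_fatou ℱ hq (Ws := fun j => fun ω => Y u ω - Y (v (j + K)) ω)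
    (W := fun ω => (Y u ω - Y s ω) - L ω)
    (fun j => (hmeas u ⟨hu0, huT⟩).sub (hmeas (v (j + K)) ⟨hv0 _, hvleT _⟩))
    (((hmeas u ⟨hu0, huT⟩).sub (hmeas s ⟨hs, hst.le.trans htT⟩)).sub hL1)
    ?_
    (integrable_rpow_of_memLp hq ((memLp_of_integrable_rpow hq
      ((hmeas u ⟨hu0, huT⟩).sub (hmeas s ⟨hs, hst.le.trans htT⟩))
      (hint hs hsu huT)).sub hLmem))
    ?_ ?_
  · intro j
    rcases le_total u (v (j + K)) with h | h
    · have h1 : Integrable (fun ω => ‖Y (v (j + K)) ω - Y u ω‖ ^ q) μ :=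
        hint hu0 h (hvleT _)
      refine h1.congr ?_
      refine Filter.Eventually.of_forall fun ω => ?_
      show ‖Y (v (j + K)) ω - Y u ω‖ ^ q = ‖Y u ω - Y (v (j + K)) ω‖ ^ q
      rw [norm_sub_rev]
    · exact hint (hv0 _) h huT
  · have h1 : Filter.Tendsto (fun j => eLpNorm (f (j + K) - L) q' μ) atTop (𝓝 0) :=
      hLtend.comp (tendsto_add_atTop_nat K)
    refine h1.congr fun j => ?_
    rw [heq j, eLpNorm_neg]
  · intro j
    have hwv : w' ≤ v (j + K) := (hK (j + K) (Nat.le_add_left K j)).le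
    rcases le_total u (v (j + K)) with h | h
    · have h3 := hw'3 u (v (j + K)) huw.le h (hvlt _)
      rw [condLqrs_sub_comm ℱ q r s (Y u) (Y (v (j + K)))]
      exact le_trans (condLqrs_mono_base ℱ hq hr ((hw'1.trans huw).le) _) h3
    · have h3 := hw'3 (v (j + K)) u hwv h hut
      exact le_trans (condLqrs_mono_base ℱ hq hr ((hw'1.trans_le hwv).le) _) h3



end Stmt5Aux
end Stmt5AuxSection

/-- Lemma 2.6: a process with finite `‖·‖_{p,q,r,[0,T]}` norm is
`L^{q,r}_•`-regulated: the map `t ↦ δY_{s,t}` admits left and right limits in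
`L^{q,r}_s`. -/
theorem statement5
    {Ω : Type*} {m0 : MeasurableSpace Ω} (μ : Measure Ω) [IsProbabilityMeasure μ]
    (ℱ : MeasureTheory.Filtration ℝ m0) (T : ℝ) (hT : 0 < T)
    {E : Type*} [NormedAddCommGroup E] [NormedSpace ℝ E] [CompleteSpace E]
    (p q : ℝ) (hp : 1 ≤ p) (hq : 1 ≤ q) (r : ℝ≥0∞) (hr : 1 ≤ r)
    (Y : ℝ → Ω → E)
    (hmeas : ∀ t ∈ Set.Icc (0 : ℝ) T, AEStronglyMeasurable (Y t) μ)
    (hint : ∀ ⦃u v : ℝ⦄, 0 ≤ u → u ≤ v → v ≤ T →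
      Integrable (fun ω => ‖Y v ω - Y u ω‖ ^ q) μ)
    (hfin : pqrVar μ ℱ p q r Y 0 T < ⊤) :
    ∀ s ∈ Set.Ico (0 : ℝ) T,
      -- right limits in L^{q,r}_s
      (∀ t ∈ Set.Ico s T, ∃ L : Ω → E, MemLqrs μ ℱ q r s L ∧
        Filter.Tendsto
          (fun u => condLqrs μ ℱ q r s (fun ω => (Y u ω - Y s ω) - L ω))
          (nhdsWithin t (Set.Ioc t T)) (nhds 0)) ∧
      -- left limits in L^{q,r}_s
      (∀ t ∈ Set.Ioc s T, ∃ L : Ω → E, MemLqrs μ ℱ q r s L ∧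
        Filter.Tendsto
          (fun u => condLqrs μ ℱ q r s (fun ω => (Y u ω - Y s ω) - L ω))
          (nhdsWithin t (Set.Ico s t)) (nhds 0)) := by
  intro s hs
  obtain ⟨hs0, hsT⟩ := hs
  constructor
  · intro t ht
    exact Stmt5Aux.exists_right_limit μ ℱ hp hq hr hT hmeas hint hfin.ne hs0 ht.1 ht.2
  · intro t ht
    exact Stmt5Aux.exists_left_limit μ ℱ hp hq hr hT hmeas hint hfin.ne hs0 ht.1 ht.2
end
end

section
/- Let p, q ∈ [1,∞) and ν > 0. If Y ∈ V^pL^q and (Y^n)_{n∈ℕ} is a sequence of processes with ‖Y^n‖_{p,q,∞,[0,T]} ≤ ν for every n and ‖Y^n − Y‖_{p,q,[0,T]} → 0 as n → ∞, then ‖Y‖_{p,q,∞,[0,T]} ≤ ν. In other words, the set 𝓑^{p,q,∞}(ν) := {Y ∈ V^pL^{q,∞} : ‖Y‖_{p,q,∞,[0,T]} ≤ ν} is a closed subset of V^pL^q. -/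
open MeasureTheory Filter Set ENNReal

noncomputable section

private lemma aux_rpow_add_le {q : ℝ} (hq : 1 ≤ q) {a b k : ℝ} (ha : 0 ≤ a) (hb : 0 ≤ b)
    (hk : 0 < k) : (a + b) ^ q ≤ (1 + k) ^ q * a ^ q + ((1 + k) / k) ^ q * b ^ q := by
  have hq0 : 0 ≤ q := by linarith
  have hmax : a + b ≤ (1 + k) * max a (b / k) := by
    rcases le_total (b / k) a with h | h
    · have : b ≤ k * a := by rw [div_le_iff₀ hk] at h; linarith [h]
      rw [max_eq_left h]; nlinarith
    · have ha' : a ≤ b / k := h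
      rw [max_eq_right h]
      have : b = k * (b / k) := by field_simp
      nlinarith [div_nonneg hb hk.le]
  have h1 : (a + b) ^ q ≤ ((1 + k) * max a (b / k)) ^ q :=
    Real.rpow_le_rpow (by linarith) hmax hq0
  have h2 : ((1 + k) * max a (b / k)) ^ q = (1 + k) ^ q * (max a (b / k)) ^ q :=
    Real.mul_rpow (by linarith) (le_max_of_le_left ha)
  have h3 : (max a (b / k)) ^ q ≤ a ^ q + (b / k) ^ q := by
    rcases le_total a (b / k) with h | h
    · rw [max_eq_right h]
      exact le_add_of_nonneg_left (Real.rpow_nonneg ha q)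
    · rw [max_eq_left h]
      exact le_add_of_nonneg_right (Real.rpow_nonneg (div_nonneg hb hk.le) q)
  have h4 : (b / k) ^ q = b ^ q / k ^ q := Real.div_rpow hb hk.le q
  have h5 : ((1 + k) / k) ^ q = (1 + k) ^ q / k ^ q := Real.div_rpow (by linarith) hk.le q
  have hkq : 0 < k ^ q := Real.rpow_pos_of_pos hk q
  calc (a + b) ^ q ≤ (1 + k) ^ q * (a ^ q + (b / k) ^ q) := by
        rw [h2] at h1
        exact h1.trans (mul_le_mul_of_nonneg_left h3 (Real.rpow_nonneg (by linarith) q))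
    _ = (1 + k) ^ q * a ^ q + ((1 + k) / k) ^ q * b ^ q := by
        rw [h4, h5]; field_simp

private lemma aux_liminf_add (u v : ℕ → ℝ≥0∞) :
    liminf u atTop + liminf v atTop ≤ liminf (fun k => u k + v k) atTop := by
  rw [liminf_eq, liminf_eq]
  have hA : {a : ℝ≥0∞ | ∀ᶠ n in atTop, a ≤ u n}.Nonempty := ⟨0, by simp⟩
  have hB : {a : ℝ≥0∞ | ∀ᶠ n in atTop, a ≤ v n}.Nonempty := ⟨0, by simp⟩
  rw [ENNReal.sSup_add hA]
  refine iSup₂_le fun a ha => ?_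
  rw [ENNReal.add_sSup hB]
  refine iSup₂_le fun b hb => ?_
  refine le_liminf_of_le (by isBoundedDefault) ?_
  filter_upwards [ha, hb] with n h1 h2
  exact add_le_add h1 h2

private lemma aux_sum_liminf {ι : Type*} (s : Finset ι) (f : ι → ℕ → ℝ≥0∞) :
    ∑ i ∈ s, liminf (f i) atTop ≤ liminf (fun k => ∑ i ∈ s, f i k) atTop := by
  classical
  induction s using Finset.induction_on with
  | empty => simp
  | insert a s hx ih =>
    rw [Finset.sum_insert hx]
    refine (add_le_add_right ih _).trans ?_
    refine (aux_liminf_add (f a) (fun k => ∑ i ∈ s, f i k)).trans ?_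
    refine liminf_le_liminf (Eventually.of_forall fun k => ?_)
    rw [Finset.sum_insert hx]

private lemma aux_rpow_liminf {c : ℝ} (hc : 0 < c) (u : ℕ → ℝ≥0∞) :
    (liminf u atTop) ^ c ≤ liminf (fun k => u k ^ c) atTop := by
  have hmono : Monotone (fun x : ℝ≥0∞ => x ^ c) := fun x y h => ENNReal.rpow_le_rpow h hc.le
  have := hmono.map_liminf_of_continuousAt (F := atTop) u
    (ENNReal.continuous_rpow_const.continuousAt)
  rw [this]
  exact le_rfl

private lemma aux_tendsto_rpow_zero {c : ℝ} (hc : 0 < c) {u : ℕ → ℝ≥0∞}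
    (h : Tendsto u atTop (nhds 0)) : Tendsto (fun k => u k ^ c) atTop (nhds 0) := by
  have : Tendsto (fun x : ℝ≥0∞ => x ^ c) (nhds 0) (nhds (0 ^ c)) :=
    ENNReal.continuous_rpow_const.continuousAt
  rw [ENNReal.zero_rpow_of_pos hc] at this
  exact this.comp h

private lemma IntervalPartition.pt_mono {s t : ℝ} (P : IntervalPartition s t) {i j : ℕ} (hij : i ≤ j)
    (hj : j ≤ P.n) : P.pt i ≤ P.pt j := by
  induction j with
  | zero => have : i = 0 := Nat.le_zero.mp hij; simp [this]
  | succ m ih =>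
    rcases Nat.lt_or_ge i (m+1) with h | h
    · have : P.pt i ≤ P.pt m := by
        rcases Nat.eq_or_lt_of_le (Nat.lt_succ_iff.mp h) with rfl | hm
        · exact le_rfl
        · exact ih (Nat.lt_succ_iff.mp h) (by omega)
      exact this.trans (P.mono m (by omega)).le
    · have : i = m + 1 := le_antisymm hij h
      simp [this]

private lemma eLpNormEssSup_eq' {Ω : Type*} {m0 : MeasurableSpace Ω} (μ : Measure Ω)
    (f : Ω → ℝ) : eLpNormEssSup f μ = essSup (fun x => (‖f x‖₊ : ℝ≥0∞)) μ := rfl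

private lemma pqrVar_term_le' {Ω : Type*} {m0 : MeasurableSpace Ω} (μ : Measure Ω)
    (ℱ : MeasureTheory.Filtration ℝ m0) {E : Type*} [NormedAddCommGroup E]
    {p : ℝ} (q : ℝ) (r : ℝ≥0∞) (hp : 1 ≤ p) (Z : ℝ → Ω → E) {s t : ℝ}
    (P : IntervalPartition s t) {i : ℕ} (hi : i < P.n) :
    condLqrs μ ℱ q r (P.pt i) (fun ω => Z (P.pt (i+1)) ω - Z (P.pt i) ω) ≤
      pqrVar μ ℱ p q r Z s t := by
  have hp0 : p ≠ 0 := by positivity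
  set x := condLqrs μ ℱ q r (P.pt i) (fun ω => Z (P.pt (i+1)) ω - Z (P.pt i) ω) with hx
  have h1 : x = (x ^ p) ^ (1/p) := by
    rw [← ENNReal.rpow_mul, mul_one_div_cancel hp0, ENNReal.rpow_one]
  rw [h1, pqrVar]
  refine le_trans ?_ (le_iSup (fun P : IntervalPartition s t => (∑ i ∈ Finset.range P.n,
    (condLqrs μ ℱ q r (P.pt i) fun ω => Z (P.pt (i+1)) ω - Z (P.pt i) ω) ^ p) ^ (1/p)) P)
  exact ENNReal.rpow_le_rpow
    (Finset.single_le_sum (f := fun j => (condLqrs μ ℱ q r (P.pt j)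
      fun ω => Z (P.pt (j+1)) ω - Z (P.pt j) ω) ^ p)
      (fun j _ => zero_le) (Finset.mem_range.mpr hi)) (by positivity)

/-- Lemma 2.9: the ball `𝓑^{p,q,∞}(ν)` is a closed subset of
`V^p L^q`. -/
theorem statement7
    {Ω : Type*} {m0 : MeasurableSpace Ω} (μ : Measure Ω) [IsProbabilityMeasure μ]
    (ℱ : MeasureTheory.Filtration ℝ m0) (T : ℝ) (hT : 0 < T)
    {E : Type*} [NormedAddCommGroup E]
    (p q : ℝ) (hp : 1 ≤ p) (hq : 1 ≤ q) (ν : ℝ) (hν : 0 < ν)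
    (Y : ℝ → Ω → E) (Yn : ℕ → ℝ → Ω → E)
    (hY : MemVpLqr μ ℱ T p q 1 Y)
    (hYn : ∀ n, MemVpLqr μ ℱ T p q ⊤ (Yn n))
    (hball : ∀ n, pqrVar μ ℱ p q ⊤ (Yn n) 0 T ≤ ENNReal.ofReal ν)
    (hconv : Filter.Tendsto
      (fun n => pqrVar μ ℱ p q 1 (fun t ω => Yn n t ω - Y t ω) 0 T)
      Filter.atTop (nhds 0)) :
    pqrVar μ ℱ p q ⊤ Y 0 T ≤ ENNReal.ofReal ν := by
  classical
  have hq0 : (0:ℝ) < q := lt_of_lt_of_le one_pos hq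
  have hp0 : (0:ℝ) < p := lt_of_lt_of_le one_pos hp
  have hqne : q ≠ 0 := ne_of_gt hq0
  have hpne : p ≠ 0 := ne_of_gt hp0
  have hcont : Continuous (fun x : ℝ => x ^ q) :=
    continuous_iff_continuousAt.2 fun x => Real.continuousAt_rpow_const x q (Or.inr hq0.le)
  rw [pqrVar]
  refine iSup_le fun P => ?_
  set N := P.n with hN
  have hpt0 : ∀ j, j ≤ N → 0 ≤ P.pt j := fun j hj => by
    have := IntervalPartition.pt_mono P (Nat.zero_le j) hj; rwa [P.h0] at this
  have hptT : ∀ j, j ≤ N → P.pt j ≤ T := fun j hj => by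
    have := IntervalPartition.pt_mono P hj le_rfl; rwa [P.hn] at this
  have hptle : ∀ i, i < N → P.pt i ≤ P.pt (i+1) := fun i hi => (P.mono i hi).le
  refine ENNReal.le_of_forall_pos_le_add fun ε' hε' _ => ?_
  set ε₀ : ℝ := (ε' : ℝ) / ν with hε₀def
  have hε₀ : 0 < ε₀ := div_pos (by exact_mod_cast hε') hν
  have hred : ENNReal.ofReal ((1 + ε₀) * ν) = ENNReal.ofReal ν + (ε' : ℝ≥0∞) := by
    rw [add_mul, one_mul, hε₀def, div_mul_cancel₀ _ (ne_of_gt hν),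
      ENNReal.ofReal_add (le_of_lt hν) (by positivity), ENNReal.ofReal_coe_nnreal]
  rw [← hred]
  -- constants
  set c1r : ℝ := (1 + ε₀) ^ q with hc1rdef
  set c2r : ℝ := ((1 + ε₀) / ε₀) ^ q with hc2rdef
  have hc1r0 : 0 < c1r := Real.rpow_pos_of_pos (by linarith) q
  have hc2r0 : 0 < c2r := Real.rpow_pos_of_pos (div_pos (by linarith) hε₀) q
  set c1 : ℝ≥0∞ := ENNReal.ofReal c1r with hc1def
  set c2 : ℝ≥0∞ := ENNReal.ofReal c2r with hc2def
  have hc1ne0 : c1 ≠ 0 := by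
    rw [hc1def]; exact (ENNReal.ofReal_pos.mpr hc1r0).ne'
  have hc1netop : c1 ≠ ⊤ := ENNReal.ofReal_ne_top
  -- the three families of conditional expectations
  set A : ℕ → Ω → ℝ :=
    fun i => μ[(fun ω => ‖Y (P.pt (i+1)) ω - Y (P.pt i) ω‖ ^ q) | ℱ (P.pt i)] with hAdef
  set B : ℕ → ℕ → Ω → ℝ :=
    fun i n => μ[(fun ω => ‖Yn n (P.pt (i+1)) ω - Yn n (P.pt i) ω‖ ^ q) | ℱ (P.pt i)] with hBdef
  set C : ℕ → ℕ → Ω → ℝ :=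
    fun i n => μ[(fun ω => ‖(Yn n (P.pt (i+1)) ω - Y (P.pt (i+1)) ω) -
      (Yn n (P.pt i) ω - Y (P.pt i) ω)‖ ^ q) | ℱ (P.pt i)] with hCdef
  -- integrability
  have hint1 : ∀ i, i < N → Integrable (fun ω => ‖Y (P.pt (i+1)) ω - Y (P.pt i) ω‖ ^ q) μ :=
    fun i hi => hY.2.1 (hpt0 i hi.le) (hptle i hi) (hptT (i+1) hi)
  have hint2 : ∀ n i, i < N → Integrable (fun ω => ‖Yn n (P.pt (i+1)) ω - Yn n (P.pt i) ω‖ ^ q) μ :=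
    fun n i hi => (hYn n).2.1 (hpt0 i hi.le) (hptle i hi) (hptT (i+1) hi)
  have hmeasY : ∀ j, j ≤ N → AEStronglyMeasurable (Y (P.pt j)) μ :=
    fun j hj => hY.1 _ ⟨hpt0 j hj, hptT j hj⟩
  have hmeasYn : ∀ n j, j ≤ N → AEStronglyMeasurable (Yn n (P.pt j)) μ :=
    fun n j hj => (hYn n).1 _ ⟨hpt0 j hj, hptT j hj⟩
  have hmeas3 : ∀ n i, i < N → AEStronglyMeasurable (fun ω =>
      ‖(Yn n (P.pt (i+1)) ω - Y (P.pt (i+1)) ω) - (Yn n (P.pt i) ω - Y (P.pt i) ω)‖ ^ q) μ :=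
    fun n i hi => hcont.comp_aestronglyMeasurable
      ((((hmeasYn n (i+1) hi).sub (hmeasY (i+1) hi)).sub
        ((hmeasYn n i hi.le).sub (hmeasY i hi.le))).norm)
  have hint3 : ∀ n i, i < N → Integrable (fun ω =>
      ‖(Yn n (P.pt (i+1)) ω - Y (P.pt (i+1)) ω) - (Yn n (P.pt i) ω - Y (P.pt i) ω)‖ ^ q) μ := by
    intro n i hi
    refine Integrable.mono' (((hint2 n i hi).const_mul ((2:ℝ)^q)).add
      ((hint1 i hi).const_mul ((2:ℝ)^q))) (hmeas3 n i hi) (Eventually.of_forall fun ω => ?_)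
    rw [Real.norm_eq_abs, abs_of_nonneg (Real.rpow_nonneg (norm_nonneg _) q)]
    have hre : (Yn n (P.pt (i+1)) ω - Y (P.pt (i+1)) ω) - (Yn n (P.pt i) ω - Y (P.pt i) ω)
        = (Yn n (P.pt (i+1)) ω - Yn n (P.pt i) ω) - (Y (P.pt (i+1)) ω - Y (P.pt i) ω) := by abel
    rw [hre]
    calc ‖(Yn n (P.pt (i+1)) ω - Yn n (P.pt i) ω) - (Y (P.pt (i+1)) ω - Y (P.pt i) ω)‖ ^ q
        ≤ (‖Yn n (P.pt (i+1)) ω - Yn n (P.pt i) ω‖ + ‖Y (P.pt (i+1)) ω - Y (P.pt i) ω‖) ^ q :=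
          Real.rpow_le_rpow (norm_nonneg _) (norm_sub_le _ _) hq0.le
      _ ≤ (1+1) ^ q * ‖Yn n (P.pt (i+1)) ω - Yn n (P.pt i) ω‖ ^ q +
          ((1+1)/1) ^ q * ‖Y (P.pt (i+1)) ω - Y (P.pt i) ω‖ ^ q :=
          aux_rpow_add_le hq (norm_nonneg _) (norm_nonneg _) one_pos
      _ = (2:ℝ) ^ q * ‖Yn n (P.pt (i+1)) ω - Yn n (P.pt i) ω‖ ^ q +
          (2:ℝ) ^ q * ‖Y (P.pt (i+1)) ω - Y (P.pt i) ω‖ ^ q := by norm_num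
  -- pointwise inequality and conditional expectation inequality
  have hcondineq : ∀ n i, i < N → ∀ᵐ ω ∂μ, A i ω ≤ c1r * B i n ω + c2r * C i n ω := by
    intro n i hi
    have hptw : ∀ ω, ‖Y (P.pt (i+1)) ω - Y (P.pt i) ω‖ ^ q ≤
        (c1r • (fun ω => ‖Yn n (P.pt (i+1)) ω - Yn n (P.pt i) ω‖ ^ q) +
          c2r • (fun ω => ‖(Yn n (P.pt (i+1)) ω - Y (P.pt (i+1)) ω) -
            (Yn n (P.pt i) ω - Y (P.pt i) ω)‖ ^ q)) ω := by
      intro ω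
      simp only [Pi.add_apply, Pi.smul_apply, smul_eq_mul]
      have hxy : (Yn n (P.pt (i+1)) ω - Y (P.pt (i+1)) ω) - (Yn n (P.pt i) ω - Y (P.pt i) ω)
          = (Yn n (P.pt (i+1)) ω - Yn n (P.pt i) ω) - (Y (P.pt (i+1)) ω - Y (P.pt i) ω) := by abel
      rw [hxy]
      have hgen : ∀ x y : E, ‖x‖ ≤ ‖y‖ + ‖y - x‖ := fun x y => by
        have h0 : y - (y - x) = x := by abel
        calc ‖x‖ = ‖y - (y - x)‖ := by rw [h0]
          _ ≤ ‖y‖ + ‖y - x‖ := norm_sub_le _ _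
      have h1 : ‖Y (P.pt (i+1)) ω - Y (P.pt i) ω‖ ≤ ‖Yn n (P.pt (i+1)) ω - Yn n (P.pt i) ω‖ +
          ‖(Yn n (P.pt (i+1)) ω - Yn n (P.pt i) ω) - (Y (P.pt (i+1)) ω - Y (P.pt i) ω)‖ :=
        hgen _ _
      calc ‖Y (P.pt (i+1)) ω - Y (P.pt i) ω‖ ^ q
          ≤ (‖Yn n (P.pt (i+1)) ω - Yn n (P.pt i) ω‖ +
            ‖(Yn n (P.pt (i+1)) ω - Yn n (P.pt i) ω) - (Y (P.pt (i+1)) ω - Y (P.pt i) ω)‖) ^ q :=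
            Real.rpow_le_rpow (norm_nonneg _) h1 hq0.le
        _ ≤ c1r * ‖Yn n (P.pt (i+1)) ω - Yn n (P.pt i) ω‖ ^ q + c2r *
            ‖(Yn n (P.pt (i+1)) ω - Yn n (P.pt i) ω) - (Y (P.pt (i+1)) ω - Y (P.pt i) ω)‖ ^ q := by
            rw [hc1rdef, hc2rdef]
            exact aux_rpow_add_le hq (norm_nonneg _) (norm_nonneg _) hε₀
    have hmono := condExp_mono (m := ℱ (P.pt i)) (μ := μ) (hint1 i hi)
      (((hint2 n i hi).smul c1r).add ((hint3 n i hi).smul c2r))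
      (Eventually.of_forall hptw)
    have hadd := condExp_add (μ := μ) (m := ℱ (P.pt i))
      ((hint2 n i hi).smul c1r) ((hint3 n i hi).smul c2r)
    have hs1 := condExp_smul (μ := μ) (m := ℱ (P.pt i)) c1r
      (fun ω => ‖Yn n (P.pt (i+1)) ω - Yn n (P.pt i) ω‖ ^ q)
    have hs2 := condExp_smul (μ := μ) (m := ℱ (P.pt i)) c2r
      (fun ω => ‖(Yn n (P.pt (i+1)) ω - Y (P.pt (i+1)) ω) -
        (Yn n (P.pt i) ω - Y (P.pt i) ω)‖ ^ q)
    filter_upwards [hmono, hadd, hs1, hs2] with ω h1 h2 h3 h4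
    calc A i ω ≤ (μ[c1r • (fun ω => ‖Yn n (P.pt (i+1)) ω - Yn n (P.pt i) ω‖ ^ q) +
          c2r • (fun ω => ‖(Yn n (P.pt (i+1)) ω - Y (P.pt (i+1)) ω) -
            (Yn n (P.pt i) ω - Y (P.pt i) ω)‖ ^ q) | ℱ (P.pt i)]) ω := h1
      _ = c1r * B i n ω + c2r * C i n ω := by
          rw [h2]
          simp only [Pi.add_apply] at h3 h4 ⊢
          rw [h3, h4]
          simp [hBdef, hCdef, smul_eq_mul]
  -- nonnegativity
  have hA0 : ∀ i, 0 ≤ᵐ[μ] A i := fun i =>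
    condExp_nonneg (Eventually.of_forall fun ω => Real.rpow_nonneg (norm_nonneg _) q)
  have hC0 : ∀ n j, 0 ≤ᵐ[μ] C j n := fun n j =>
    condExp_nonneg (Eventually.of_forall fun ω => Real.rpow_nonneg (norm_nonneg _) q)
  -- convergence of eLpNorm (C i n) 1
  have hC1 : ∀ i, i < N → Tendsto (fun n => eLpNorm (C i n) 1 μ) atTop (nhds 0) := by
    intro i hi
    have hterm : ∀ n, condLqrs μ ℱ q 1 (P.pt i) (fun ω =>
        (Yn n (P.pt (i+1)) ω - Y (P.pt (i+1)) ω) - (Yn n (P.pt i) ω - Y (P.pt i) ω)) ≤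
        pqrVar μ ℱ p q 1 (fun t ω => Yn n t ω - Y t ω) 0 T := fun n =>
      pqrVar_term_le' μ ℱ q 1 hp (fun t ω => Yn n t ω - Y t ω) P hi
    have hCl : Tendsto (fun n => condLqrs μ ℱ q 1 (P.pt i) (fun ω =>
        (Yn n (P.pt (i+1)) ω - Y (P.pt (i+1)) ω) - (Yn n (P.pt i) ω - Y (P.pt i) ω))) atTop (nhds 0) :=
      tendsto_of_tendsto_of_tendsto_of_le_of_le tendsto_const_nhds hconv
        (fun n => zero_le) (fun n => hterm n)
    have h := aux_tendsto_rpow_zero hq0 hCl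
    refine h.congr fun n => ?_
    rw [condLqrs, ← ENNReal.rpow_mul, one_div, inv_mul_cancel₀ hqne, ENNReal.rpow_one]
  -- a.e. convergent subsequence for the sum of the C's
  have hCmeas : ∀ i n, AEStronglyMeasurable (C i n) μ := fun i n => by
    rw [hCdef]
    exact (stronglyMeasurable_condExp.mono (ℱ.le _)).aestronglyMeasurable
  set G : ℕ → Ω → ℝ := fun n => ∑ i ∈ Finset.range N, C i n with hGdef
  have hGapply : ∀ n, G n = fun ω => ∑ i ∈ Finset.range N, C i n ω := fun n => by
    funext ω; rw [hGdef]; simp [Finset.sum_apply]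
  have hGmeas : ∀ n, AEStronglyMeasurable (G n) μ := fun n => by
    rw [hGapply n]
    exact Finset.aestronglyMeasurable_fun_sum _ (fun i _ => hCmeas i n)
  have hGto : Tendsto (fun n => eLpNorm (G n) 1 μ) atTop (nhds 0) := by
    have hsum : Tendsto (fun n => ∑ i ∈ Finset.range N, eLpNorm (C i n) 1 μ) atTop (nhds 0) := by
      have h := tendsto_finset_sum (Finset.range N)
        (fun i hi => hC1 i (Finset.mem_range.mp hi))
      simpa using h
    refine tendsto_of_tendsto_of_tendsto_of_le_of_le tendsto_const_nhds hsum
      (fun n => zero_le) (fun n => ?_)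
    exact eLpNorm_sum_le (fun i _ => hCmeas i n) le_rfl
  have hGmeasure : TendstoInMeasure μ G atTop (0 : Ω → ℝ) := by
    refine tendstoInMeasure_of_tendsto_eLpNorm one_ne_zero hGmeas aestronglyMeasurable_zero ?_
    simpa [sub_zero] using hGto
  obtain ⟨φ, hφmono, hφae⟩ := hGmeasure.exists_seq_tendsto_ae
  -- the liminf bounds
  set L : ℕ → ℝ≥0∞ := fun i => liminf (fun k => eLpNorm (B i (φ k)) ⊤ μ) atTop with hLdef
  have hkey : ∀ i, i < N → eLpNorm (A i) ⊤ μ ≤ c1 * L i := by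
    intro i hi
    rcases eq_top_or_lt_top (L i) with htop | hLlt
    · rw [htop, ENNReal.mul_top hc1ne0]; exact le_top
    rw [eLpNorm_exponent_top, eLpNormEssSup_eq']
    refine essSup_le_of_ae_le _ ?_
    filter_upwards [hφae, hA0 i,
      ae_all_iff.2 (fun n : ℕ => hcondineq n i hi),
      ae_all_iff.2 (fun n : ℕ => ae_all_iff.2 (fun j : ℕ => hC0 n j)),
      ae_all_iff.2 (fun n : ℕ => ae_le_eLpNormEssSup (f := B i n) (μ := μ))]
      with ω hω1 hω2 hω3 hω5 hω6
    have hCto : Tendsto (fun k => C i (φ k) ω) atTop (nhds 0) := by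
      refine squeeze_zero (g := fun k => G (φ k) ω) (fun k => hω5 (φ k) i) (fun k => ?_) ?_
      · have h := Finset.single_le_sum (f := fun j => C j (φ k) ω)
          (fun j _ => hω5 (φ k) j) (Finset.mem_range.mpr hi)
        simpa [hGdef, Finset.sum_apply] using h
      · simpa using hω1
    refine ENNReal.le_of_forall_pos_le_add fun η hη hlt => ?_
    set η₁ : ℝ≥0∞ := ((η : ℝ≥0∞) / 2) / c1 with hη₁def
    have hη2pos : (0:ℝ≥0∞) < (η : ℝ≥0∞) / 2 :=
      ENNReal.div_pos (by exact_mod_cast hη.ne') ENNReal.ofNat_ne_top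
    have hη₁0 : η₁ ≠ 0 := (ENNReal.div_pos hη2pos.ne' hc1netop).ne'
    have hfreq : ∃ᶠ k in atTop, eLpNorm (B i (φ k)) ⊤ μ < L i + η₁ :=
      frequently_lt_of_liminf_lt (by isBoundedDefault)
        (ENNReal.lt_add_right hLlt.ne hη₁0)
    have hev : ∀ᶠ k in atTop, ENNReal.ofReal (c2r * C i (φ k) ω) < (η : ℝ≥0∞) / 2 := by
      have h2 : Tendsto (fun k => ENNReal.ofReal (c2r * C i (φ k) ω)) atTop (nhds 0) := by
        have h3 := ENNReal.tendsto_ofReal (hCto.const_mul c2r)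
        simpa using h3
      exact h2.eventually_lt_const hη2pos
    obtain ⟨k, hk1, hk2⟩ := (hfreq.and_eventually hev).exists
    calc (‖A i ω‖₊ : ℝ≥0∞) = ENNReal.ofReal (A i ω) := Real.enorm_eq_ofReal hω2
      _ ≤ ENNReal.ofReal (c1r * B i (φ k) ω + c2r * C i (φ k) ω) :=
          ENNReal.ofReal_le_ofReal (hω3 (φ k))
      _ ≤ ENNReal.ofReal (c1r * B i (φ k) ω) + ENNReal.ofReal (c2r * C i (φ k) ω) :=
          ENNReal.ofReal_add_le
      _ ≤ c1 * ENNReal.ofReal (B i (φ k) ω) + (η : ℝ≥0∞) / 2 := by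
          rw [ENNReal.ofReal_mul hc1r0.le]
          exact add_le_add_right hk2.le _
      _ ≤ c1 * (L i + η₁) + (η : ℝ≥0∞) / 2 := by
          refine add_le_add_left (mul_le_mul_right ?_ c1) _
          refine le_trans (Real.ofReal_le_enorm _) (le_trans (hω6 (φ k)) ?_)
          rw [← eLpNorm_exponent_top (f := B i (φ k)) (μ := μ)]
          exact hk1.le
      _ = c1 * L i + (c1 * η₁ + (η : ℝ≥0∞) / 2) := by ring
      _ ≤ c1 * L i + (η : ℝ≥0∞) := by
          have hcancel : c1 * η₁ = (η : ℝ≥0∞) / 2 := by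
            rw [hη₁def]; exact ENNReal.mul_div_cancel' (fun h => absurd h hc1ne0) (fun h => absurd h hc1netop)
          rw [hcancel, ENNReal.add_halves]
  -- assembling the sum
  set c : ℝ := p / q with hcdef
  have hcpos : 0 < c := div_pos hp0 hq0
  have hA_eq : ∀ i, (condLqrs μ ℱ q ⊤ (P.pt i)
      (fun ω => Y (P.pt (i+1)) ω - Y (P.pt i) ω)) ^ p = (eLpNorm (A i) ⊤ μ) ^ c := by
    intro i
    simp only [condLqrs, hAdef]
    rw [← ENNReal.rpow_mul]
    have hexp : 1/q * p = c := by rw [hcdef]; field_simp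
    rw [hexp]
  have hB_eq : ∀ n i, (condLqrs μ ℱ q ⊤ (P.pt i)
      (fun ω => Yn n (P.pt (i+1)) ω - Yn n (P.pt i) ω)) ^ p = (eLpNorm (B i n) ⊤ μ) ^ c := by
    intro n i
    simp only [condLqrs, hBdef]
    rw [← ENNReal.rpow_mul]
    have hexp : 1/q * p = c := by rw [hcdef]; field_simp
    rw [hexp]
  have hballP : ∀ n, ∑ i ∈ Finset.range N, (condLqrs μ ℱ q ⊤ (P.pt i)
      (fun ω => Yn n (P.pt (i+1)) ω - Yn n (P.pt i) ω)) ^ p ≤ (ENNReal.ofReal ν) ^ p := by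
    intro n
    have hb := hball n
    rw [pqrVar] at hb
    have h1 : (∑ i ∈ Finset.range N, (condLqrs μ ℱ q ⊤ (P.pt i)
        (fun ω => Yn n (P.pt (i+1)) ω - Yn n (P.pt i) ω)) ^ p) ^ (1/p) ≤ ENNReal.ofReal ν :=
      le_trans (le_iSup (fun P : IntervalPartition 0 T => (∑ i ∈ Finset.range P.n,
        (condLqrs μ ℱ q ⊤ (P.pt i)
          (fun ω => Yn n (P.pt (i+1)) ω - Yn n (P.pt i) ω)) ^ p) ^ (1/p)) P) hb
    have h2 := ENNReal.rpow_le_rpow h1 hp0.le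
    rwa [← ENNReal.rpow_mul, one_div, inv_mul_cancel₀ hpne, ENNReal.rpow_one] at h2
  have hsumbound : ∑ i ∈ Finset.range N, (condLqrs μ ℱ q ⊤ (P.pt i)
      (fun ω => Y (P.pt (i+1)) ω - Y (P.pt i) ω)) ^ p ≤ c1 ^ c * (ENNReal.ofReal ν) ^ p := by
    calc ∑ i ∈ Finset.range N, (condLqrs μ ℱ q ⊤ (P.pt i)
          (fun ω => Y (P.pt (i+1)) ω - Y (P.pt i) ω)) ^ p
        ≤ ∑ i ∈ Finset.range N, c1 ^ c * liminf (fun k => (condLqrs μ ℱ q ⊤ (P.pt i)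
          (fun ω => Yn (φ k) (P.pt (i+1)) ω - Yn (φ k) (P.pt i) ω)) ^ p) atTop := by
          refine Finset.sum_le_sum fun i hi' => ?_
          have hi := Finset.mem_range.mp hi'
          rw [hA_eq i]
          calc (eLpNorm (A i) ⊤ μ) ^ c ≤ (c1 * L i) ^ c :=
                ENNReal.rpow_le_rpow (hkey i hi) hcpos.le
            _ = c1 ^ c * (L i) ^ c := ENNReal.mul_rpow_of_nonneg _ _ hcpos.le
            _ ≤ c1 ^ c * liminf (fun k => (eLpNorm (B i (φ k)) ⊤ μ) ^ c) atTop := by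
                rw [hLdef]
                exact mul_le_mul_right (aux_rpow_liminf hcpos _) _
            _ = c1 ^ c * liminf (fun k => (condLqrs μ ℱ q ⊤ (P.pt i)
                (fun ω => Yn (φ k) (P.pt (i+1)) ω - Yn (φ k) (P.pt i) ω)) ^ p) atTop := by
                congr 1
                exact Filter.liminf_congr (Eventually.of_forall fun k => (hB_eq (φ k) i).symm)
      _ = c1 ^ c * ∑ i ∈ Finset.range N, liminf (fun k => (condLqrs μ ℱ q ⊤ (P.pt i)
          (fun ω => Yn (φ k) (P.pt (i+1)) ω - Yn (φ k) (P.pt i) ω)) ^ p) atTop := by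
          rw [Finset.mul_sum]
      _ ≤ c1 ^ c * liminf (fun k => ∑ i ∈ Finset.range N, (condLqrs μ ℱ q ⊤ (P.pt i)
          (fun ω => Yn (φ k) (P.pt (i+1)) ω - Yn (φ k) (P.pt i) ω)) ^ p) atTop :=
          mul_le_mul_right (aux_sum_liminf _ _) _
      _ ≤ c1 ^ c * (ENNReal.ofReal ν) ^ p := by
          refine mul_le_mul_right ?_ _
          refine le_trans (liminf_le_liminf (Eventually.of_forall fun k => hballP (φ k))) ?_
          rw [liminf_const]
  -- final computation
  refine le_trans (ENNReal.rpow_le_rpow hsumbound (by positivity)) ?_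
  rw [ENNReal.mul_rpow_of_nonneg _ _ (by positivity), ← ENNReal.rpow_mul, ← ENNReal.rpow_mul]
  have h1 : c * (1/p) = 1/q := by rw [hcdef]; field_simp
  have h2 : p * (1/p) = 1 := mul_one_div_cancel hpne
  rw [h1, h2, ENNReal.rpow_one, hc1def,
    ENNReal.ofReal_rpow_of_nonneg hc1r0.le (by positivity), hc1rdef,
    ← Real.rpow_mul (by linarith), mul_one_div_cancel hqne, Real.rpow_one,
    ← ENNReal.ofReal_mul (by linarith)]

end
end
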